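/- arXiv:0901.3119 — 5 statements merged into one kernel-verified Lean document; each statement's English description precedes it below -/
import Mathlib

section
/- If C and C' are stacks of n ≥ 2 burnt pancakes and C' is obtained from C by a single flip, then the number of deep blocks changes by at most one: |b(C') − b(C)| ≤ 1. -/
/-- A stack of burnt pancakes, listed from top to bottom.  Each pancake is a pair
`(size, b)` where `b = true` means the pancake lies burnt-side up
and `b = false` means burnt-side down. -/
abbrev BStack := List (ℕ × Bool)

/-- An `i`-flip: the top `i` pancakes are reversed and their orientations switched. -/
def bflip (i : ℕ) (C : BStack) : BStack :=
  ((C.take i).reverse.map fun p => (p.1, !p.2)) ++ C.drop i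

/-- The sorted stack `I n`: pancakes `1,…,n` from top to bottom, all burnt-side down. -/
def Istk (n : ℕ) : BStack := (List.range n).map fun k => (k + 1, false)

/-- The stack `-I n`: pancakes `1,…,n` from top to bottom, all burnt-side up. -/
def negIstk (n : ℕ) : BStack := (List.range n).map fun k => (k + 1, true)

/-- `C` is a stack of `n` burnt pancakes: its sizes form a permutation of `{1,…,n}`. -/
def IsBStack (n : ℕ) (C : BStack) : Prop :=
  (C.map Prod.fst).Perm ((List.range n).map (· + 1))

/-- `g C`: the minimum number of flips transforming `C` into the sorted stack `I n`. -/
noncomputable def gB (C : BStack) : ℕ :=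
  sInf { m | ∃ s : List ℕ, (∀ i ∈ s, 1 ≤ i ∧ i ≤ C.length) ∧ s.length = m ∧
      s.foldl (fun D i => bflip i D) C = Istk C.length }

/-- `-C`: switch the orientation of every pancake, keeping the order of pancakes. -/
def negStk (C : BStack) : BStack := C.map fun p => (p.1, !p.2)

/-- Two burnt pancakes on consecutive positions (`p` directly above `q`) are adjacent iff
they form a substack of `I n` (both burnt-side down, sizes increasing by one downwards)
or of its full reversal (both burnt-side up, sizes decreasing by one downwards). -/
def adjPair (p q : ℕ × Bool) : Bool :=
  (!p.2 && !q.2 && (q.1 == p.1 + 1)) || (p.2 && q.2 && (p.1 == q.1 + 1))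

/-- The list of adjacency indicators between consecutive positions of `C`. -/
def adjSeq (C : BStack) : List Bool := (C.zip C.tail).map fun pq => adjPair pq.1 pq.2

/-- `a C`: the number of adjacencies of `C`. -/
def aB (C : BStack) : ℕ := (adjSeq C).count true

/-- `b C`: the number of deep blocks of `C`.  A block is a maximal run of pairwise
adjacent consecutive pancakes (at least two pancakes); it is deep iff it does not contain
the topmost pancake, i.e. iff its run of adjacencies starts just after a non-adjacency. -/
def bB (C : BStack) : ℕ :=
  (((adjSeq C).zip (adjSeq C).tail).filter fun pq => !pq.1 && pq.2).length


def Pcnt (s : List Bool) : ℕ := ((s.zip s.tail).filter fun pq => !pq.1 && pq.2).length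
def lB (s : List Bool) : Bool := s.getLastD false
def hB (s : List Bool) : Bool := s.headD false

lemma Pcnt_cons_cons (a b : Bool) (l : List Bool) :
    Pcnt (a :: b :: l) = (if (!a && b) then 1 else 0) + Pcnt (b :: l) := by
  simp only [Pcnt, List.tail_cons, List.zip_cons_cons, List.filter_cons]
  cases (!a && b) <;> simp [Nat.add_comm]

lemma lB_cons (a b : Bool) (l : List Bool) : lB (a :: b :: l) = lB (b :: l) := by
  simp [lB, List.getLastD_cons]

lemma lB_snoc (t : List Bool) (a : Bool) : lB (t ++ [a]) = a := by
  simp [lB, List.getLastD_eq_getLast?, List.getLast?_concat]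

lemma lB_reverse (t : List Bool) (h : t ≠ []) : lB t.reverse = hB t := by
  cases t with
  | nil => simp at h
  | cons a t' => simp [hB, List.reverse_cons, lB_snoc]

lemma Pcnt_append_cons (t : List Bool) (a : Bool) (u : List Bool) :
    Pcnt (t ++ a :: u) = Pcnt (t ++ [a]) + Pcnt (a :: u) := by
  induction t with
  | nil =>
    cases u <;> simp [Pcnt]
  | cons b t' ih =>
    cases t' with
    | nil =>
      simp only [List.cons_append, List.nil_append]
      rw [Pcnt_cons_cons b a u, Pcnt_cons_cons b a ([] : List Bool)]
      simp [Pcnt]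
    | cons c t'' =>
      simp only [List.cons_append] at ih ⊢
      rw [Pcnt_cons_cons b c, Pcnt_cons_cons b c, ih]
      omega

lemma Pcnt_snoc (t : List Bool) (a : Bool) (h : t ≠ []) :
    Pcnt (t ++ [a]) = Pcnt t + (if (!(lB t) && a) then 1 else 0) := by
  induction t with
  | nil => simp at h
  | cons b t' ih =>
    cases t' with
    | nil =>
      simp only [List.cons_append, List.nil_append]
      rw [Pcnt_cons_cons b a ([] : List Bool)]
      simp [Pcnt, lB, Nat.add_comm]
    | cons c t'' =>
      have ih' := ih (by simp)
      simp only [List.cons_append] at ih' ⊢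
      rw [Pcnt_cons_cons b c, ih', Pcnt_cons_cons b c, lB_cons]
      omega

lemma Pcnt_cons (a : Bool) (u : List Bool) (h : u ≠ []) :
    Pcnt (a :: u) = (if (!a && hB u) then 1 else 0) + Pcnt u := by
  cases u with
  | nil => simp at h
  | cons b u' => rw [Pcnt_cons_cons]; rfl

lemma Pcnt_reverse (t : List Bool) :
    Pcnt t.reverse + (if lB t then 1 else 0) = Pcnt t + (if hB t then 1 else 0) := by
  induction t with
  | nil => rfl
  | cons a t' ih =>
    cases t' with
    | nil => rfl
    | cons c t'' =>
      have hne : (c :: t'').reverse ≠ [] := by simp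
      rw [List.reverse_cons, Pcnt_snoc _ _ hne, lB_reverse _ (by simp),
        Pcnt_cons a (c :: t'') (by simp), lB_cons]
      cases hc : hB (c :: t'') <;> cases a <;>
        simp_all [hB] <;> omega

lemma Pcnt_append (t u : List Bool) (ht : t ≠ []) (hu : u ≠ []) :
    Pcnt (t ++ u) = Pcnt t + (if (!(lB t) && hB u) then 1 else 0) + Pcnt u := by
  cases u with
  | nil => simp at hu
  | cons c u' =>
    rw [Pcnt_append_cons, Pcnt_snoc t c ht]
    cases u' with
    | nil => simp [Pcnt, hB]
    | cons d u'' =>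
      rw [Pcnt_cons c _ (by simp)]
      simp [hB]
      try omega

lemma Pcnt_key (t u v w : List Bool) (hv : v.length ≤ 1) (hvw : v.length = w.length) :
    |(Pcnt (t.reverse ++ w ++ u) : ℤ) - (Pcnt (t ++ v ++ u) : ℤ)| ≤ 1 := by
  rw [abs_le]
  have hr := Pcnt_reverse t
  rcases v with _ | ⟨y, v'⟩
  · -- v = [], so w = []
    have hw : w = [] := List.length_eq_zero_iff.mp (by simpa using hvw.symm)
    subst hw
    simp only [List.append_nil]
    rcases eq_or_ne t [] with ht | ht
    · subst ht; simp
    · rcases eq_or_ne u [] with hu | hu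
      · subst hu; simp only [List.append_nil]
        cases hlt : lB t <;> cases hht : hB t <;> simp_all <;> omega
      · rw [Pcnt_append t u ht hu, Pcnt_append t.reverse u (by simpa using ht) hu,
          lB_reverse t ht]
        cases hlt : lB t <;> cases hht : hB t <;> cases hhu : hB u <;> simp_all <;> omega
  · -- v = [y]
    have hv' : v' = [] := by
      cases v' with
      | nil => rfl
      | cons a l => simp at hv
    subst hv'
    obtain ⟨x, hx⟩ : ∃ x, w = [x] := by
      cases w with
      | nil => simp at hvw
      | cons x w' =>
        cases w' with
        | nil => exact ⟨x, rfl⟩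
        | cons b l => simp at hvw
    subst hx
    simp only [List.append_assoc, List.singleton_append]
    rcases eq_or_ne t [] with ht | ht
    · subst ht
      simp only [List.reverse_nil, List.nil_append]
      rcases eq_or_ne u [] with hu | hu
      · subst hu; simp [Pcnt]
      · rw [Pcnt_cons x u hu, Pcnt_cons y u hu]
        cases x <;> cases y <;> cases hhu : hB u <;> simp_all <;> omega
    · have hrt : t.reverse ≠ [] := by simpa using ht
      rcases eq_or_ne u [] with hu | hu
      · subst hu
        rw [Pcnt_snoc t.reverse x hrt, Pcnt_snoc t y ht, lB_reverse t ht]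
        cases hlt : lB t <;> cases hht : hB t <;> cases x <;> cases y <;> simp_all <;> omega
      · rw [Pcnt_append_cons t y u, Pcnt_append_cons t.reverse x u,
          Pcnt_snoc t y ht, Pcnt_snoc t.reverse x hrt,
          Pcnt_cons y u hu, Pcnt_cons x u hu, lB_reverse t ht]
        cases hlt : lB t <;> cases hht : hB t <;> cases hhu : hB u <;>
          cases x <;> cases y <;> simp_all <;> omega

lemma adjSeq_cons_cons (p q : ℕ × Bool) (C : BStack) :
    adjSeq (p :: q :: C) = adjPair p q :: adjSeq (q :: C) := rfl

lemma adjSeq_singleton (p : ℕ × Bool) : adjSeq [p] = [] := rfl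

lemma getLastD_snoc {α : Type*} (l : List α) (x d : α) : (l ++ [x]).getLastD d = x := by
  simp [List.getLastD_eq_getLast?, List.getLast?_concat]

lemma adjSeq_snoc (A : BStack) (x : ℕ × Bool) (h : A ≠ []) :
    adjSeq (A ++ [x]) = adjSeq A ++ [adjPair (A.getLastD (0, false)) x] := by
  induction A with
  | nil => simp at h
  | cons a A' ih =>
    cases A' with
    | nil => rfl
    | cons b A'' =>
      have ih' := ih (by simp)
      simp only [List.cons_append] at ih' ⊢
      rw [adjSeq_cons_cons, ih', adjSeq_cons_cons]
      simp only [List.cons_append, List.getLastD_cons]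

lemma adjPair_neg (p q : ℕ × Bool) :
    adjPair (q.1, !q.2) (p.1, !p.2) = adjPair p q := by
  obtain ⟨p1, p2⟩ := p; obtain ⟨q1, q2⟩ := q
  cases p2 <;> cases q2 <;> simp [adjPair]

lemma adjSeq_revneg (A : BStack) :
    adjSeq (A.reverse.map fun p => (p.1, !p.2)) = (adjSeq A).reverse := by
  induction A with
  | nil => rfl
  | cons a A' ih =>
    cases A' with
    | nil => rfl
    | cons b A'' =>
      have hne : ((b :: A'').reverse.map fun p => (p.1, !p.2)) ≠ [] := by simp
      rw [List.reverse_cons, List.map_append]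
      simp only [List.map_cons, List.map_nil]
      rw [adjSeq_snoc _ _ hne, ih, adjSeq_cons_cons, List.reverse_cons]
      congr 2
      have : ((A''.reverse ++ [b]).map fun p => (p.1, !p.2)).getLastD (0, false)
          = (b.1, !b.2) := by
        rw [List.map_append]
        simp only [List.map_cons, List.map_nil]
        exact getLastD_snoc _ _ _
      rw [this, adjPair_neg a b, List.reverse_cons]

lemma adjSeq_append_ex (A B : BStack) (hA : A ≠ []) :
    ∃ v : List Bool, v.length = (if B = [] then 0 else 1) ∧
      adjSeq (A ++ B) = adjSeq A ++ v ++ adjSeq B := by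
  induction A with
  | nil => simp at hA
  | cons a A' ih =>
    cases A' with
    | nil =>
      cases B with
      | nil => exact ⟨[], by simp, by simp [adjSeq]⟩
      | cons b B' =>
        refine ⟨[adjPair a b], by simp, ?_⟩
        simp only [List.singleton_append, List.cons_append, List.nil_append]
        rw [adjSeq_cons_cons, adjSeq_singleton]
        rfl
    | cons c A'' =>
      obtain ⟨v, hv1, hv2⟩ := ih (by simp)
      refine ⟨v, hv1, ?_⟩
      simp only [List.cons_append] at hv2 ⊢
      rw [adjSeq_cons_cons, hv2, adjSeq_cons_cons]
      simp

/-- If `C` is a stack of `n ≥ 2` burnt pancakes and `C'` is obtained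
from `C` by a single flip, then the number of deep blocks changes by at most one:
`|b(C') − b(C)| ≤ 1`. -/
theorem deep_blocks_change_le_one (n : ℕ) (hn : 2 ≤ n) (C : BStack)
    (hC : IsBStack n C) (i : ℕ) (hi1 : 1 ≤ i) (hi2 : i ≤ n) :
    |(bB (bflip i C) : ℤ) - (bB C : ℤ)| ≤ 1 := by
  classical
  have hlen : C.length = n := by
    have h1 := hC.length_eq
    simpa using h1
  have hCne : C ≠ [] := by
    intro h; rw [h] at hlen; simp at hlen; omega
  have hT : C.take i ≠ [] := by
    rw [Ne, List.take_eq_nil_iff]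
    push_neg
    exact ⟨by omega, hCne⟩
  obtain ⟨v, hvlen, hveq⟩ := adjSeq_append_ex (C.take i) (C.drop i) hT
  obtain ⟨w, hwlen, hweq⟩ :=
    adjSeq_append_ex ((C.take i).reverse.map fun p => (p.1, !p.2)) (C.drop i)
      (by simpa using hT)
  have heq1 : adjSeq (bflip i C) = (adjSeq (C.take i)).reverse ++ w ++ adjSeq (C.drop i) := by
    rw [bflip, hweq, adjSeq_revneg]
  have heq2 : adjSeq C = adjSeq (C.take i) ++ v ++ adjSeq (C.drop i) := by
    conv_lhs => rw [← List.take_append_drop i C]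
    exact hveq
  have hb1 : bB (bflip i C) = Pcnt (adjSeq (bflip i C)) := rfl
  have hb2 : bB C = Pcnt (adjSeq C) := rfl
  rw [hb1, hb2, heq1, heq2]
  exact Pcnt_key (adjSeq (C.take i)) (adjSeq (C.drop i)) v w
    (by rw [hvlen]; split <;> omega) (by rw [hvlen, hwlen])
end

section
/- For every positive integer n, the expected number of adjacencies in a uniformly random stack of n burnt pancakes equals (1/2)·(n−1)/n; consequently, fewer than half of all n!·2^n stacks of n burnt pancakes contain an adjacency. -/
/-- The stack of `n` burnt pancakes determined by a permutation `π` (the pancake at the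
`j`-th position from the top has size `π j + 1`) and an orientation vector `w`
(`w j = true` iff the pancake at position `j` lies burnt-side up). -/
def toBStack {n : ℕ} (π : Equiv.Perm (Fin n)) (w : Fin n → Bool) : BStack :=
  (List.finRange n).map fun j => ((π j : ℕ) + 1, w j)


section ExpectedAdjAux

open Equiv Finset

private lemma pancake_count_true_eq (l : List Bool) :
    l.count true = (l.map fun b => if b then 1 else 0).sum := by
  induction l with
  | nil => rfl
  | cons b t ih => cases b <;> simp [List.count_cons, ih, Nat.add_comm]

private lemma pancake_adjSeq_ofFn (m : ℕ) (g : Fin (m+1) → ℕ × Bool) :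
    adjSeq (List.ofFn g) = List.ofFn (fun k : Fin m => adjPair (g k.castSucc) (g k.succ)) := by
  apply List.ext_getElem
  · simp [adjSeq]
  · intro i h1 h2
    simp only [adjSeq, List.getElem_map, List.getElem_ofFn]
    have hlen : i < (List.ofFn g).length - 1 := by simpa [adjSeq] using h2
    rw [List.getElem_zip, List.getElem_tail, List.getElem_ofFn, List.getElem_ofFn]
    show adjPair _ _ = _
    congr 1

private lemma pancake_aB_eq_sum (m : ℕ) (π : Equiv.Perm (Fin (m+1))) (w : Fin (m+1) → Bool) :
    aB (toBStack π w) = ∑ k : Fin m,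
      (if adjPair ((π k.castSucc : ℕ) + 1, w k.castSucc) ((π k.succ : ℕ) + 1, w k.succ)
        then 1 else 0) := by
  have h1 : toBStack π w = List.ofFn (fun j : Fin (m+1) => ((π j : ℕ) + 1, w j)) := by
    rw [List.ofFn_eq_map]; rfl
  rw [aB, h1, pancake_adjSeq_ofFn, pancake_count_true_eq, List.map_ofFn, List.sum_ofFn]
  rfl

private lemma pancake_sum_w {α : Type*} [Fintype α] [DecidableEq α] (a b : α) (hab : a ≠ b)
    (F : Bool → Bool → ℕ) :
    ∑ w : α → Bool, F (w a) (w b)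
      = 2 ^ (Fintype.card α - 2) * ∑ x : Bool, ∑ y : Bool, F x y := by
  classical
  have hba : b ≠ a := hab.symm
  rw [← Equiv.sum_comp (Equiv.funSplitAt a Bool).symm
    (fun w : α → Bool => F (w a) (w b))]
  rw [Fintype.sum_prod_type]
  have step1 : ∀ (x : Bool) (g : {j : α // j ≠ a} → Bool),
      ((Equiv.funSplitAt a Bool).symm (x, g)) a = x := by
    intro x g; simp [Equiv.funSplitAt, Equiv.piSplitAt]
  have step2 : ∀ (x : Bool) (g : {j : α // j ≠ a} → Bool),
      ((Equiv.funSplitAt a Bool).symm (x, g)) b = g ⟨b, hba⟩ := by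
    intro x g; simp [Equiv.funSplitAt, Equiv.piSplitAt, hba]
  simp only [step1, step2]
  have hcard : Fintype.card {j : {j : α // j ≠ a} // j ≠ ⟨b, hba⟩} = Fintype.card α - 2 := by
    rw [Fintype.card_subtype_compl, Fintype.card_subtype_compl]
    simp only [Fintype.card_unique]
    omega
  have inner : ∀ x : Bool, ∑ g : {j : α // j ≠ a} → Bool, F x (g ⟨b, hba⟩)
      = 2 ^ (Fintype.card α - 2) * ∑ y : Bool, F x y := by
    intro x
    rw [← Equiv.sum_comp (Equiv.funSplitAt (⟨b, hba⟩ : {j : α // j ≠ a}) Bool).symm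
      (fun g : {j : α // j ≠ a} → Bool => F x (g ⟨b, hba⟩))]
    rw [Fintype.sum_prod_type]
    have step3 : ∀ (y : Bool) (h : {j : {j : α // j ≠ a} // j ≠ ⟨b, hba⟩} → Bool),
        ((Equiv.funSplitAt (⟨b, hba⟩ : {j : α // j ≠ a}) Bool).symm (y, h)) ⟨b, hba⟩ = y := by
      intro y h; simp [Equiv.funSplitAt, Equiv.piSplitAt]
    simp only [step3, Finset.sum_const, Finset.card_univ, smul_eq_mul]
    rw [Finset.mul_sum]
    apply Finset.sum_congr rfl
    intro y _
    rw [Fintype.card_fun, hcard, Fintype.card_bool, mul_comm]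
  simp only [inner, ← Finset.mul_sum]

private lemma pancake_perm_zero (k : ℕ) (q : Fin (k+1)) :
    ∑ σ : Equiv.Perm (Fin (k+1)), (if σ 0 = q then 1 else 0) = k.factorial := by
  rw [← Equiv.sum_comp Equiv.Perm.decomposeFin.symm
    (fun σ : Equiv.Perm (Fin (k+1)) => if σ 0 = q then (1:ℕ) else 0)]
  rw [Fintype.sum_prod_type]
  simp [Finset.sum_ite_eq, Fintype.card_perm, Fintype.card_fin]

private lemma pancake_perm_01 (l : ℕ) :
    ∑ σ : Equiv.Perm (Fin (l+2)), (if (σ 1 : ℕ) = (σ 0 : ℕ) + 1 then 1 else 0)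
      = (l+1).factorial := by
  rw [← Equiv.sum_comp Equiv.Perm.decomposeFin.symm
    (fun σ : Equiv.Perm (Fin (l+2)) => if (σ 1 : ℕ) = (σ 0 : ℕ) + 1 then (1:ℕ) else 0)]
  rw [Fintype.sum_prod_type]
  have key : ∀ (p : Fin (l+2)) (e : Equiv.Perm (Fin (l+1))),
      (((Equiv.swap 0 p) (e 0).succ : Fin (l+2)) : ℕ) = (p : ℕ) + 1 ↔
        ((e 0 : ℕ) = (p : ℕ) ∧ (p : ℕ) < l + 1) := by
    intro p e
    rcases eq_or_ne ((e 0).succ) p with h | h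
    · rw [h, Equiv.swap_apply_right]
      constructor
      · intro h0; simp at h0
      · rintro ⟨h1, -⟩
        exfalso
        have : ((e 0).succ : ℕ) = (p:ℕ) := by rw [h]
        simp [Fin.val_succ, h1] at this
    · rw [Equiv.swap_apply_of_ne_of_ne (Fin.succ_ne_zero _) h]
      rw [Fin.val_succ]
      constructor
      · intro h1
        have h2 : (e 0 : ℕ) = (p : ℕ) := by omega
        exact ⟨h2, h2 ▸ (e 0).isLt⟩
      · rintro ⟨h1, -⟩; omega
  have hmain : ∀ (p : Fin (l+2)), ∑ e : Equiv.Perm (Fin (l+1)),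
      (if ((Equiv.Perm.decomposeFin.symm (p, e)) 1 : ℕ)
          = ((Equiv.Perm.decomposeFin.symm (p, e)) 0 : ℕ) + 1 then (1:ℕ) else 0)
      = if (p : ℕ) < l + 1 then l.factorial else 0 := by
    intro p
    simp only [Equiv.Perm.decomposeFin_symm_apply_zero, Equiv.Perm.decomposeFin_symm_apply_one]
    by_cases hp : (p : ℕ) < l + 1
    · rw [if_pos hp]
      rw [← pancake_perm_zero l ⟨(p : ℕ), hp⟩]
      apply Finset.sum_congr rfl
      intro e _
      congr 1
      rw [eq_iff_iff]
      rw [key p e]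
      constructor
      · rintro ⟨h1, -⟩; exact Fin.ext h1
      · intro h1; exact ⟨by rw [h1], hp⟩
    · rw [if_neg hp]
      apply Finset.sum_eq_zero
      intro e _
      rw [if_neg]
      rw [key p e]
      rintro ⟨-, h⟩; exact hp h
  rw [Finset.sum_congr rfl (fun p _ => hmain p)]
  rw [Finset.sum_ite, Finset.sum_const_zero, Finset.sum_const, add_zero]
  have hc : (Finset.univ.filter fun p : Fin (l+2) => (p:ℕ) < l+1).card = l + 1 := by
    have he : (Finset.univ.filter fun p : Fin (l+2) => (p:ℕ) < l+1)
        = Finset.univ.filter fun p : Fin (l+2) => p ≠ Fin.last (l+1) := by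
      apply Finset.filter_congr
      intro p _
      simp [Fin.ext_iff, Fin.last]
      omega
    rw [he, Finset.filter_ne']
    simp
  rw [hc, Nat.factorial_succ, smul_eq_mul]

private lemma pancake_exists_rho (l : ℕ) (a b : Fin (l+2)) (hab : a ≠ b) :
    ∃ ρ : Equiv.Perm (Fin (l+2)), ρ 0 = a ∧ ρ 1 = b := by
  set b' : Fin (l+2) := Equiv.swap 0 a b with hb'
  have hb'0 : b' ≠ 0 := by
    simp only [hb', Ne, Equiv.swap_apply_eq_iff, Equiv.swap_apply_left]
    exact fun h => hab h.symm
  refine ⟨Equiv.swap 0 a * Equiv.swap 1 b', ?_, ?_⟩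
  · simp only [Equiv.Perm.mul_apply]
    rw [Equiv.swap_apply_of_ne_of_ne (by norm_num) (Ne.symm hb'0), Equiv.swap_apply_left]
  · simp only [Equiv.Perm.mul_apply]
    rw [Equiv.swap_apply_left, hb', Equiv.swap_apply_self]

private lemma pancake_perm_count (l : ℕ) (a b : Fin (l+2)) (hab : a ≠ b) :
    ∑ π : Equiv.Perm (Fin (l+2)), (if (π b : ℕ) = (π a : ℕ) + 1 then 1 else 0)
      = (l+1).factorial := by
  obtain ⟨ρ, h0, h1⟩ := pancake_exists_rho l a b hab
  rw [← Equiv.sum_comp (Equiv.mulRight ρ⁻¹)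
    (fun π : Equiv.Perm (Fin (l+2)) => if (π b : ℕ) = (π a : ℕ) + 1 then (1:ℕ) else 0)]
  rw [← pancake_perm_01 l]
  apply Finset.sum_congr rfl
  intro σ _
  have ha : ρ⁻¹ a = 0 := by rw [← h0]; exact ρ.symm_apply_apply 0
  have hb : ρ⁻¹ b = 1 := by rw [← h1]; exact ρ.symm_apply_apply 1
  simp only [Equiv.coe_mulRight, Equiv.Perm.mul_apply, ha, hb]

private lemma pancake_total (l : ℕ) :
    ∑ π : Equiv.Perm (Fin (l+2)), ∑ w : Fin (l+2) → Bool, aB (toBStack π w)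
      = (l+1) * 2^(l+1) * (l+1).factorial := by
  have hne : ∀ k : Fin (l+1), (k.castSucc : Fin (l+2)) ≠ k.succ := by
    intro k
    simp [Fin.ext_iff]
  calc ∑ π : Equiv.Perm (Fin (l+2)), ∑ w : Fin (l+2) → Bool, aB (toBStack π w)
      = ∑ π : Equiv.Perm (Fin (l+2)), ∑ w : Fin (l+2) → Bool, ∑ k : Fin (l+1),
          (if adjPair ((π k.castSucc : ℕ) + 1, w k.castSucc) ((π k.succ : ℕ) + 1, w k.succ)
            then 1 else 0) := by
        apply Finset.sum_congr rfl; intro π _; apply Finset.sum_congr rfl; intro w _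
        exact pancake_aB_eq_sum (l+1) π w
    _ = ∑ k : Fin (l+1), ∑ π : Equiv.Perm (Fin (l+2)), ∑ w : Fin (l+2) → Bool,
          (if adjPair ((π k.castSucc : ℕ) + 1, w k.castSucc) ((π k.succ : ℕ) + 1, w k.succ)
            then 1 else 0) := by
        exact Eq.trans (Finset.sum_congr rfl fun π _ => Finset.sum_comm) Finset.sum_comm
    _ = ∑ k : Fin (l+1), ∑ π : Equiv.Perm (Fin (l+2)),
          2^l * (∑ x : Bool, ∑ y : Bool,
            (if adjPair ((π k.castSucc : ℕ) + 1, x) ((π k.succ : ℕ) + 1, y) then 1 else 0)) := by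
        apply Finset.sum_congr rfl; intro k _; apply Finset.sum_congr rfl; intro π _
        rw [pancake_sum_w k.castSucc k.succ (hne k)
          (fun x y => if adjPair ((π k.castSucc : ℕ) + 1, x) ((π k.succ : ℕ) + 1, y) then 1 else 0)]
        simp
    _ = ∑ k : Fin (l+1), ∑ π : Equiv.Perm (Fin (l+2)),
          2^l * ((if (π k.succ : ℕ) = (π k.castSucc : ℕ) + 1 then 1 else 0)
            + (if (π k.castSucc : ℕ) = (π k.succ : ℕ) + 1 then 1 else 0)) := by
        apply Finset.sum_congr rfl; intro k _; apply Finset.sum_congr rfl; intro π _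
        congr 1
        rw [Fintype.sum_bool, Fintype.sum_bool, Fintype.sum_bool]
        simp only [adjPair]
        simp [Nat.add_comm, Nat.succ_inj]
    _ = (l+1) * 2^(l+1) * (l+1).factorial := by
        have hk : ∀ k : Fin (l+1), ∑ π : Equiv.Perm (Fin (l+2)),
            2^l * ((if (π k.succ : ℕ) = (π k.castSucc : ℕ) + 1 then 1 else 0)
              + (if (π k.castSucc : ℕ) = (π k.succ : ℕ) + 1 then 1 else 0))
            = 2^(l+1) * (l+1).factorial := by
          intro k
          rw [← Finset.mul_sum, Finset.sum_add_distrib,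
            pancake_perm_count l k.castSucc k.succ (hne k),
            pancake_perm_count l k.succ k.castSucc (hne k).symm]
          ring
        rw [Finset.sum_congr rfl (fun k _ => hk k), Finset.sum_const, Finset.card_univ,
          Fintype.card_fin, smul_eq_mul]
        ring

end ExpectedAdjAux

/-- For every positive integer `n`, the expected number of adjacencies
in a uniformly random stack of `n` burnt pancakes equals `(1/2)·(n−1)/n`; consequently,
fewer than half of all `n!·2^n` stacks of `n` burnt pancakes contain an adjacency. -/
theorem expected_adjacencies (n : ℕ) (hn : 1 ≤ n) :
    (∑ π : Equiv.Perm (Fin n), ∑ w : Fin n → Bool, (aB (toBStack π w) : ℚ)) /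
        (n.factorial * 2 ^ n) = (1 / 2) * (((n : ℚ) - 1) / n) ∧
    2 * Nat.card {pw : Equiv.Perm (Fin n) × (Fin n → Bool) //
        0 < aB (toBStack pw.1 pw.2)} < n.factorial * 2 ^ n := by
  match n, hn with
  | 1, _ =>
    have h0 : ∀ (π : Equiv.Perm (Fin 1)) (w : Fin 1 → Bool), aB (toBStack π w) = 0 := by
      intro π w
      rw [pancake_aB_eq_sum 0 π w]
      simp
    constructor
    · simp only [h0]
      norm_num
    · have : IsEmpty {pw : Equiv.Perm (Fin 1) × (Fin 1 → Bool) //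
          0 < aB (toBStack pw.1 pw.2)} := by
        constructor
        rintro ⟨pw, hpw⟩
        rw [h0] at hpw
        exact lt_irrefl 0 hpw
      rw [Nat.card_of_isEmpty]
      norm_num
  | (l+2), _ =>
    have hT : ∑ π : Equiv.Perm (Fin (l+2)), ∑ w : Fin (l+2) → Bool, aB (toBStack π w)
        = (l+1) * 2^(l+1) * (l+1).factorial := pancake_total l
    constructor
    · have hcast : (∑ π : Equiv.Perm (Fin (l+2)), ∑ w : Fin (l+2) → Bool,
          (aB (toBStack π w) : ℚ))
          = ((∑ π : Equiv.Perm (Fin (l+2)), ∑ w : Fin (l+2) → Bool, aB (toBStack π w) : ℕ) : ℚ) := by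
        push_cast
        rfl
      rw [hcast, hT]
      rw [Nat.factorial_succ (l+1)]
      have h1 : ((l:ℚ)+2) ≠ 0 := by positivity
      have h2 : ((l+1).factorial : ℚ) ≠ 0 := by
        exact_mod_cast Nat.factorial_ne_zero (l+1)
      have h3 : (2:ℚ)^(l+2) ≠ 0 := by positivity
      push_cast
      field_simp
      ring
    · have hle : Nat.card {pw : Equiv.Perm (Fin (l+2)) × (Fin (l+2) → Bool) //
          0 < aB (toBStack pw.1 pw.2)}
          ≤ (l+1) * 2^(l+1) * (l+1).factorial := by
        rw [← hT, Nat.card_eq_fintype_card, Fintype.card_subtype]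
        calc (Finset.univ.filter fun pw : Equiv.Perm (Fin (l+2)) × (Fin (l+2) → Bool) =>
              0 < aB (toBStack pw.1 pw.2)).card
            ≤ ∑ pw ∈ (Finset.univ.filter
                fun pw : Equiv.Perm (Fin (l+2)) × (Fin (l+2) → Bool) =>
                0 < aB (toBStack pw.1 pw.2)), aB (toBStack pw.1 pw.2) := by
              rw [Finset.card_eq_sum_ones]
              exact Finset.sum_le_sum fun i hi => (Finset.mem_filter.mp hi).2
          _ ≤ ∑ pw : Equiv.Perm (Fin (l+2)) × (Fin (l+2) → Bool), aB (toBStack pw.1 pw.2) :=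
              Finset.sum_le_sum_of_subset (Finset.filter_subset _ _)
          _ = ∑ π : Equiv.Perm (Fin (l+2)), ∑ w : Fin (l+2) → Bool, aB (toBStack π w) := by
              rw [Fintype.sum_prod_type]
      have hfin : (l+2).factorial * 2^(l+2) = (l+2) * ((l+1).factorial * 2^(l+2)) := by
        rw [Nat.factorial_succ (l+1)]
        ring
      have h2T : 2 * ((l+1) * 2^(l+1) * (l+1).factorial)
          = (l+1) * ((l+1).factorial * 2^(l+2)) := by ring
      calc 2 * Nat.card {pw : Equiv.Perm (Fin (l+2)) × (Fin (l+2) → Bool) //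
              0 < aB (toBStack pw.1 pw.2)}
          ≤ 2 * ((l+1) * 2^(l+1) * (l+1).factorial) := by omega
        _ = (l+1) * ((l+1).factorial * 2^(l+2)) := h2T
        _ < (l+2) * ((l+1).factorial * 2^(l+2)) := by
            apply Nat.mul_lt_mul_of_lt_of_le (by omega) (le_refl _)
            positivity
        _ = (l+2).factorial * 2^(l+2) := hfin.symm
end

section
/- For every integer n ≥ 16, the number of stacks of n burnt pancakes that have no adjacency and can be sorted in at most n − 1 + n/(4·log₂ n) flips is less than (1/4)·n!·2^n; consequently, at least half of the n!·2^n/2 or more stacks with no adjacency require more than n − 1 + n/(4·log₂ n) flips. -/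
namespace PK

/-- orientation switch -/
def osw (p : ℕ × Bool) : ℕ × Bool := (p.1, !p.2)

lemma osw_osw (p : ℕ × Bool) : osw (osw p) = p := by simp [osw]

lemma bflip_eq (i : ℕ) (C : BStack) :
    bflip i C = ((C.take i).reverse.map osw) ++ C.drop i := rfl

lemma length_bflip (i : ℕ) (C : BStack) : (bflip i C).length = C.length := by
  simp [bflip_eq]
  omega

lemma take_bflip (i : ℕ) (C : BStack) :
    (bflip i C).take i = (C.take i).reverse.map osw := by
  rw [bflip_eq, List.take_append]
  have h1 : ((C.take i).reverse.map osw).length = min i C.length := by simp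
  rcases le_or_gt i C.length with h | h
  · rw [List.take_of_length_le (by omega)]
    simp [h1, min_eq_left h]
  · rw [List.take_of_length_le (by omega)]
    simp [h1, min_eq_right h.le]
    omega

lemma drop_bflip (i : ℕ) (C : BStack) : (bflip i C).drop i = C.drop i := by
  rw [bflip_eq, List.drop_append]
  have h1 : ((C.take i).reverse.map osw).length = min i C.length := by simp
  rcases le_or_gt i C.length with h | h
  · rw [List.drop_of_length_le (by omega)]
    simp [h1, min_eq_left h]
  · rw [List.drop_of_length_le (by omega)]
    simp [h1, min_eq_right h.le]
    have : C.drop i = [] := List.drop_of_length_le h.le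
    simp [this]
    omega

lemma bflip_bflip (i : ℕ) (C : BStack) : bflip i (bflip i C) = C := by
  conv_rhs => rw [← List.take_append_drop i C]
  rw [bflip_eq, take_bflip, drop_bflip]
  have ho : osw ∘ osw = id := funext osw_osw
  simp [List.map_reverse, ho]

lemma bflip_append (i : ℕ) (C D : BStack) (h : i ≤ C.length) :
    bflip i (C ++ D) = bflip i C ++ D := by
  rw [bflip_eq, bflip_eq, List.take_append_of_le_length h, List.drop_append_of_le_length h,
    List.append_assoc]

lemma map_fst_bflip_perm (i : ℕ) (C : BStack) :
    ((bflip i C).map Prod.fst).Perm (C.map Prod.fst) := by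
  rw [bflip_eq]
  calc ((C.take i).reverse.map osw ++ C.drop i).map Prod.fst
      = ((C.take i).reverse.map osw).map Prod.fst ++ (C.drop i).map Prod.fst := by
        rw [List.map_append]
    _ = ((C.take i).map Prod.fst).reverse ++ (C.drop i).map Prod.fst := by
        have ho : Prod.fst ∘ osw = Prod.fst := funext (fun p => rfl)
        simp [List.map_reverse, ho]
    _ = ((C.take i).map Prod.fst).reverse ++ (C.drop i).map Prod.fst := rfl
  exact ((List.reverse_perm _).append_right _).trans
    (by rw [← List.map_append, List.take_append_drop])

end PK

namespace PK

@[simp] lemma adjSeq_nil : adjSeq [] = [] := rfl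
@[simp] lemma adjSeq_single (x : ℕ × Bool) : adjSeq [x] = [] := rfl

lemma adjSeq_cons_cons (x y : ℕ × Bool) (l : BStack) :
    adjSeq (x :: y :: l) = adjPair x y :: adjSeq (y :: l) := by
  simp [adjSeq]

lemma adjSeq_cons (x : ℕ × Bool) (l : BStack) :
    adjSeq (x :: l) = (l.head?.map (adjPair x)).toList ++ adjSeq l := by
  cases l with
  | nil => rfl
  | cons y t => simp [adjSeq_cons_cons]

lemma length_adjSeq (l : BStack) : (adjSeq l).length = l.length - 1 := by
  simp [adjSeq]

lemma adjSeq_append_single (A : BStack) (r : ℕ × Bool) :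
    adjSeq (A ++ [r]) = adjSeq A ++ (A.getLast?.map (fun a => adjPair a r)).toList := by
  induction A with
  | nil => rfl
  | cons a A ih =>
    cases A with
    | nil => simp [adjSeq_cons_cons]
    | cons a' A' =>
      simp only [List.cons_append] at ih ⊢
      rw [adjSeq_cons_cons a a' (A' ++ [r]), ih, adjSeq_cons_cons]
      simp [List.getLast?_cons_cons]

lemma adjSeq_append_cons (A : BStack) (r : ℕ × Bool) (B : BStack) :
    adjSeq (A ++ r :: B) = adjSeq (A ++ [r]) ++ adjSeq (r :: B) := by
  induction A with
  | nil => simp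
  | cons a A ih =>
    cases A with
    | nil => simp [adjSeq_cons_cons]
    | cons a' A' =>
      simp only [List.cons_append] at ih ⊢
      rw [adjSeq_cons_cons a a' (A' ++ r :: B), ih,
        adjSeq_cons_cons a a' (A' ++ [r])]
      simp

lemma adjPair_osw (x y : ℕ × Bool) : adjPair (osw y) (osw x) = adjPair x y := by
  rcases x with ⟨a, b⟩; rcases y with ⟨c, d⟩
  cases b <;> cases d <;> simp [adjPair, osw, Bool.and_comm, Bool.or_comm]

lemma adjSeq_reverse_osw (A : BStack) :
    adjSeq ((A.map osw).reverse) = (adjSeq A).reverse := by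
  induction A with
  | nil => rfl
  | cons x A ih =>
    rw [List.map_cons, List.reverse_cons, adjSeq_append_single, ih, adjSeq_cons,
      List.getLast?_reverse, List.head?_map, List.reverse_append]
    cases A with
    | nil => rfl
    | cons y t => simp [Option.map_map, Function.comp, adjPair_osw]

end PK

namespace PK

def truePos : List Bool → List ℕ
  | [] => []
  | b :: l => if b then 0 :: (truePos l).map (· + 1) else (truePos l).map (· + 1)

lemma length_truePos (l : List Bool) : (truePos l).length = l.count true := by
  induction l with
  | nil => rfl
  | cons b l ih =>
    cases b <;> simp [truePos, ih, List.count_cons]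

lemma mem_truePos (l : List Bool) (p : ℕ) :
    p ∈ truePos l ↔ l[p]? = some true := by
  induction l generalizing p with
  | nil => simp [truePos]
  | cons b l ih =>
    cases p with
    | zero =>
      cases b <;> simp [truePos]
    | succ p =>
      cases b <;> simp [truePos, ih]

lemma getD_indexOf {α : Type*} [DecidableEq α] (l : List α) (a d : α) (h : a ∈ l) :
    l.getD (l.idxOf a) d = a := by
  induction l with
  | nil => simp at h
  | cons x l ih =>
    by_cases hx : a = x
    · subst hx; simp [List.idxOf_cons_self]
    · have : a ∈ l := by
        rcases List.mem_cons.mp h with h' | h'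
        · exact absurd h' hx
        · exact h'
      rw [List.idxOf_cons_ne _ (by exact fun hc => hx hc.symm)]
      simpa using ih this

lemma listEq_of_getD (l l' : List ℕ) (k d : ℕ)
    (h1 : l.length ≤ k) (h2 : l'.length ≤ k)
    (hm : ∀ x ∈ l, x < d) (hm' : ∀ x ∈ l', x < d)
    (hj : ∀ j < k, l.getD j d = l'.getD j d) : l = l' := by
  induction l generalizing l' k with
  | nil =>
    cases l' with
    | nil => rfl
    | cons y t =>
      have hk : 0 < k := by simp at h2; omega
      have := hj 0 hk
      simp [List.getD] at this
      have := hm' y (by simp)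
      omega
  | cons x t ih =>
    cases l' with
    | nil =>
      have hk : 0 < k := by simp at h1; omega
      have := hj 0 hk
      simp [List.getD] at this
      have := hm x (by simp)
      omega
    | cons y t' =>
      have hk : 0 < k := by simp at h1; omega
      have h0 := hj 0 hk
      simp [List.getD] at h0
      subst h0
      have ht : t = t' := by
        refine ih t' (k - 1) (by simp at h1; omega) (by simp at h2; omega)
          (fun x hx => hm x (List.mem_cons_of_mem _ hx))
          (fun x hx => hm' x (List.mem_cons_of_mem _ hx)) ?_
        intro j hjk
        have := hj (j + 1) (by omega)
        simpa [List.getD] using this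
      rw [ht]

end PK

namespace PK

lemma adjSeq_range' (a m : ℕ) :
    adjSeq ((List.range' a m).map (fun k => (k, false))) = List.replicate (m - 1) true := by
  induction m generalizing a with
  | zero => rfl
  | succ m ih =>
    cases m with
    | zero => rfl
    | succ m' =>
      rw [List.range'_succ, List.map_cons, adjSeq_cons, ih]
      have hh : ((List.range' (a+1) (m'+1)).map (fun k => (k, false))).head? =
          some (a + 1, false) := by
        rw [List.range'_succ]; rfl
      rw [hh]
      have : adjPair (a, false) (a + 1, false) = true := by simp [adjPair]
      simp [this, List.replicate_succ]

lemma Istk_eq_range' (n : ℕ) :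
    Istk n = (List.range' 1 n).map (fun k => (k, false)) := by
  rw [List.range'_eq_map_range, List.map_map]
  unfold Istk
  congr 1
  funext k
  simp [Nat.add_comm]

lemma aB_Istk (n : ℕ) : aB (Istk n) = n - 1 := by
  rw [aB, Istk_eq_range', adjSeq_range', List.count_replicate]
  simp

lemma aB_bflip (i : ℕ) (C : BStack) (h1 : 1 ≤ i) (h2 : i ≤ C.length) :
    (i = C.length ∧ aB (bflip i C) = aB C) ∨
    (i < C.length ∧ ∃ b b', (adjSeq C)[i-1]? = some b ∧
      (adjSeq (bflip i C))[i-1]? = some b' ∧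
      aB C + (cond b' 1 0) = aB (bflip i C) + (cond b 1 0)) := by
  rcases eq_or_lt_of_le h2 with he | hlt
  · left
    refine ⟨he, ?_⟩
    have ht : C.take i = C := List.take_of_length_le (le_of_eq he.symm)
    have hd : C.drop i = [] := List.drop_of_length_le (le_of_eq he.symm)
    rw [bflip_eq, ht, hd, List.append_nil, List.map_reverse, aB, aB, adjSeq_reverse_osw,
      List.count_reverse]
  · right
    refine ⟨hlt, ?_⟩
    set T := C.take i with hT
    have hTlen : T.length = i := by simp [hT]; omega
    have hTne : T ≠ [] := by
      intro hc; rw [hc] at hTlen; simp at hTlen; omega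
    obtain ⟨r, R, hR⟩ : ∃ r R, C.drop i = r :: R := by
      cases hd : C.drop i with
      | nil => exfalso; have : (C.drop i).length = C.length - i := List.length_drop; rw [hd] at this; simp at this; omega
      | cons r R => exact ⟨r, R, rfl⟩
    have hC : C = T ++ r :: R := by rw [hT, ← hR, List.take_append_drop]
    have hB : bflip i C = (T.map osw).reverse ++ r :: R := by
      rw [bflip_eq, hR, ← List.map_reverse]
    set T' := (T.map osw).reverse with hT'
    have hT'len : T'.length = i := by simp [hT', hTlen]
    have hlast : T.getLast? = some (T.getLast hTne) := List.getLast?_eq_getLast hTne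
    have hT'ne : T' ≠ [] := by
      intro hc; rw [hc] at hT'len; simp at hT'len; omega
    have hlast' : T'.getLast? = some (T'.getLast hT'ne) := List.getLast?_eq_getLast hT'ne
    refine ⟨adjPair (T.getLast hTne) r, adjPair (T'.getLast hT'ne) r, ?_, ?_, ?_⟩
    · rw [hC, adjSeq_append_cons, adjSeq_append_single, hlast]
      have hlen : (adjSeq T).length = i - 1 := by rw [length_adjSeq, hTlen]
      rw [List.append_assoc, List.getElem?_append_right (by omega)]
      simp [hlen]
    · rw [hB, adjSeq_append_cons, adjSeq_append_single, hlast']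
      have hlen : (adjSeq T').length = i - 1 := by rw [length_adjSeq, hT'len]
      rw [List.append_assoc, List.getElem?_append_right (by omega)]
      simp [hlen]
    · have hcnt : ∀ x : Bool, List.count true [x] = cond x 1 0 := by decide
      have e1 : aB C = (adjSeq T).count true + (cond (adjPair (T.getLast hTne) r) 1 0)
          + (adjSeq (r :: R)).count true := by
        rw [aB, hC, adjSeq_append_cons, adjSeq_append_single, hlast, List.count_append,
          List.count_append]
        rw [Option.map_some, Option.toList_some, hcnt]
      have e2 : aB (bflip i C) = (adjSeq T).count true
          + (cond (adjPair (T'.getLast hT'ne) r) 1 0) + (adjSeq (r :: R)).count true := by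
        rw [aB, hB, adjSeq_append_cons, adjSeq_append_single, hlast', List.count_append,
          List.count_append]
        have : (adjSeq T').count true = (adjSeq T).count true := by
          rw [hT', adjSeq_reverse_osw, List.count_reverse]
        rw [this]
        rw [Option.map_some, Option.toList_some, hcnt]
      rw [e1, e2]
      ring
end PK

namespace PK

lemma foldl_bflip_append (s : List ℕ) (D z : BStack) (hs : ∀ i ∈ s, i ≤ D.length) :
    s.foldl (fun E i => bflip i E) (D ++ z) = (s.foldl (fun E i => bflip i E) D) ++ z := by
  induction s generalizing D with
  | nil => rfl
  | cons i s ih =>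
    simp only [List.foldl_cons]
    rw [bflip_append i D z (hs i (by simp))]
    exact ih (bflip i D) (fun i' hi' => by rw [length_bflip]; exact hs i' (by simp [hi']))

lemma Istk_succ (n : ℕ) : Istk (n + 1) = Istk n ++ [(n + 1, false)] := by
  unfold Istk
  rw [List.range_succ, List.map_append]
  rfl

lemma sortable : ∀ (n : ℕ) (C : BStack), C.length = n →
    (C.map Prod.fst).Perm ((List.range n).map (· + 1)) →
    ∃ s : List ℕ, (∀ i ∈ s, 1 ≤ i ∧ i ≤ n) ∧
      s.foldl (fun D i => bflip i D) C = Istk n := by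
  intro n
  induction n with
  | zero =>
    intro C hlen _
    refine ⟨[], by simp, ?_⟩
    rw [List.length_eq_zero_iff] at hlen
    simp [hlen, Istk]
  | succ n ih =>
    intro C hlen hperm
    have hmem : n + 1 ∈ C.map Prod.fst := by
      rw [hperm.mem_iff]
      simp only [List.mem_map, List.mem_range]
      exact ⟨n, by omega, rfl⟩
    obtain ⟨j, hj, hjv⟩ := List.mem_iff_getElem.mp hmem
    rw [List.length_map] at hj
    rw [List.getElem_map] at hjv
    set x := C[j] with hx
    -- the stack after the first flip
    have hstep1 : bflip (j + 1) C =
        osw x :: ((C.take j).reverse.map osw ++ C.drop (j + 1)) := by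
      rw [bflip_eq, List.take_succ]
      have : C[j]? = some x := List.getElem?_eq_getElem hj
      rw [this]
      simp
    set E : BStack := (C.take j).reverse.map osw ++ C.drop (j + 1) with hE
    have hElen : E.length = n := by
      simp [hE]
      omega
    -- the stack with (n+1, true) on top
    have key : ∀ C2 : BStack, C2 = (n + 1, true) :: E →
        (C2.map Prod.fst).Perm ((List.range (n+1)).map (· + 1)) →
        ∃ s2 : List ℕ, (∀ i ∈ s2, 1 ≤ i ∧ i ≤ n + 1) ∧
          s2.foldl (fun D i => bflip i D) C2 = Istk (n + 1) := by
      intro C2 hC2 hperm2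
      have hC2len : C2.length = n + 1 := by simp [hC2, hElen]
      have hstep3 : bflip (n + 1) C2 = (E.reverse.map osw) ++ [(n + 1, false)] := by
        rw [bflip_eq, List.take_of_length_le (by omega), List.drop_of_length_le (by omega),
          List.append_nil, hC2]
        simp [osw]
      set D : BStack := E.reverse.map osw with hD
      have hDlen : D.length = n := by simp [hD, hElen]
      have hpermD : (D.map Prod.fst).Perm ((List.range n).map (· + 1)) := by
        have h1 : ((bflip (n+1) C2).map Prod.fst).Perm ((List.range (n+1)).map (· + 1)) :=
          (map_fst_bflip_perm _ _).trans hperm2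
        rw [hstep3, List.map_append, List.range_succ, List.map_append] at h1
        have h2 : ((List.map Prod.fst [((n:ℕ) + 1, false)] : List ℕ)) =
            (List.map (· + 1) [n]) := by simp
        rw [h2] at h1
        exact (List.perm_append_right_iff _).mp h1
      obtain ⟨s', hs'b, hs'f⟩ := ih D hDlen hpermD
      refine ⟨(n + 1) :: s', ?_, ?_⟩
      · intro i hi
        rcases List.mem_cons.mp hi with h | h
        · omega
        · have := hs'b i h; omega
      · simp only [List.foldl_cons]
        rw [hstep3, foldl_bflip_append s' D _ (fun i hi => by rw [hDlen]; exact (hs'b i hi).2),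
          hs'f, Istk_succ]
    -- case analysis on orientation of pancake n+1
    have hC1perm : ((bflip (j+1) C).map Prod.fst).Perm ((List.range (n+1)).map (· + 1)) :=
      (map_fst_bflip_perm _ _).trans hperm
    cases hb : x.2 with
    | false =>
      -- after flip j+1, top is (n+1, true)
      have htop : osw x = (n + 1, true) := by
        rcases x with ⟨a, b⟩; simp at hjv hb; simp [osw, hjv, hb]
      obtain ⟨s2, hs2b, hs2f⟩ := key (bflip (j+1) C) (by rw [hstep1, htop]) hC1perm
      refine ⟨(j + 1) :: s2, ?_, ?_⟩
      · intro i hi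
        rcases List.mem_cons.mp hi with h | h
        · omega
        · exact hs2b i h
      · simpa using hs2f
    | true =>
      have htop : osw x = (n + 1, false) := by
        rcases x with ⟨a, b⟩; simp at hjv hb; simp [osw, hjv, hb]
      have hstep2 : bflip 1 (bflip (j+1) C) = (n + 1, true) :: E := by
        rw [hstep1, htop, bflip_eq]
        simp [osw]
      have hC2perm : ((bflip 1 (bflip (j+1) C)).map Prod.fst).Perm
          ((List.range (n+1)).map (· + 1)) :=
        (map_fst_bflip_perm _ _).trans hC1perm
      obtain ⟨s2, hs2b, hs2f⟩ := key _ hstep2 hC2perm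
      refine ⟨(j + 1) :: 1 :: s2, ?_, ?_⟩
      · intro i hi
        rcases List.mem_cons.mp hi with h | h
        · omega
        · rcases List.mem_cons.mp h with h' | h'
          · omega
          · exact hs2b i h'
      · simpa using hs2f

end PK

namespace PK

lemma aB_bflip_le (i : ℕ) (D : BStack) (h1 : 1 ≤ i) (h2 : i ≤ D.length) :
    aB (bflip i D) ≤ aB D + 1 := by
  rcases aB_bflip i D h1 h2 with ⟨_, he⟩ | ⟨_, b, b', _, _, heq⟩
  · omega
  · cases b <;> cases b' <;> simp at heq <;> omega

lemma aB_bflip_notcr (i : ℕ) (D : BStack) (h1 : 1 ≤ i) (h2 : i ≤ D.length)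
    (h : aB (bflip i D) ≠ aB D + 1) : aB (bflip i D) ≤ aB D := by
  rcases aB_bflip i D h1 h2 with ⟨_, he⟩ | ⟨_, b, b', _, _, heq⟩
  · omega
  · cases b <;> cases b' <;> simp at heq <;> omega

lemma creating_mem (i : ℕ) (D : BStack) (h1 : 1 ≤ i) (h2 : i ≤ D.length)
    (hcr : aB (bflip i D) = aB D + 1) :
    (i - 1) ∈ truePos (adjSeq (bflip i D)) := by
  rcases aB_bflip i D h1 h2 with ⟨_, he⟩ | ⟨_, b, b', hb, hb', heq⟩
  · omega
  · rw [mem_truePos]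
    cases b <;> cases b' <;> simp at heq <;> first | omega | exact hb'

def encStep (D : BStack) (i : ℕ) : ℕ ⊕ ℕ :=
  if aB (bflip i D) = aB D + 1 then Sum.inl ((truePos (adjSeq (bflip i D))).idxOf (i - 1))
  else Sum.inr i

def enc : BStack → List ℕ → List (ℕ ⊕ ℕ)
  | _, [] => []
  | D, i :: s => encStep D i :: enc (bflip i D) s

def decStep (E : BStack) : ℕ ⊕ ℕ → BStack
  | Sum.inl r => bflip ((truePos (adjSeq E)).getD r 0 + 1) E
  | Sum.inr i => bflip i E

def dec (n : ℕ) (e : List (ℕ ⊕ ℕ)) : BStack := e.foldr (fun sym E => decStep E sym) (Istk n)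

lemma enc_length (D : BStack) (s : List ℕ) : (enc D s).length = s.length := by
  induction s generalizing D with
  | nil => rfl
  | cons i s ih => simp [enc, ih]

lemma dec_enc (n : ℕ) : ∀ (s : List ℕ) (D : BStack), (∀ i ∈ s, 1 ≤ i ∧ i ≤ D.length) →
    s.foldl (fun E i => bflip i E) D = Istk n → dec n (enc D s) = D := by
  intro s
  induction s with
  | nil =>
    intro D _ hf
    simpa [enc, dec] using hf.symm
  | cons i s ih =>
    intro D hb hf
    have h1 : 1 ≤ i := (hb i (by simp)).1
    have h2 : i ≤ D.length := (hb i (by simp)).2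
    have hb' : ∀ i' ∈ s, 1 ≤ i' ∧ i' ≤ (bflip i D).length := by
      intro i' hi'
      rw [length_bflip]
      exact hb i' (by simp [hi'])
    have hf' : s.foldl (fun E i => bflip i E) (bflip i D) = Istk n := by simpa using hf
    have hdec : dec n (enc (bflip i D) s) = bflip i D := ih (bflip i D) hb' hf'
    show dec n (encStep D i :: enc (bflip i D) s) = D
    unfold dec at hdec ⊢
    rw [List.foldr_cons, hdec]
    by_cases hcr : aB (bflip i D) = aB D + 1
    · rw [encStep, if_pos hcr]
      have hmem := creating_mem i D h1 h2 hcr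
      show bflip ((truePos (adjSeq (bflip i D))).getD
        ((truePos (adjSeq (bflip i D))).idxOf (i-1)) 0 + 1) (bflip i D) = D
      rw [getD_indexOf _ _ _ hmem]
      have : i - 1 + 1 = i := by omega
      rw [this, bflip_bflip]
    · rw [encStep, if_neg hcr]
      show bflip i (bflip i D) = D
      exact bflip_bflip i D

lemma enc_countInl (n : ℕ) : ∀ (s : List ℕ) (D : BStack),
    (∀ i ∈ s, 1 ≤ i ∧ i ≤ D.length) →
    s.foldl (fun E i => bflip i E) D = Istk n →
    n - 1 ≤ aB D + (enc D s).countP (fun x => x.isLeft) := by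
  intro s
  induction s with
  | nil =>
    intro D _ hf
    have : D = Istk n := by simpa using hf
    rw [this, aB_Istk]
    simp
  | cons i s ih =>
    intro D hb hf
    have h1 : 1 ≤ i := (hb i (by simp)).1
    have h2 : i ≤ D.length := (hb i (by simp)).2
    have hb' : ∀ i' ∈ s, 1 ≤ i' ∧ i' ≤ (bflip i D).length := by
      intro i' hi'
      rw [length_bflip]
      exact hb i' (by simp [hi'])
    have hf' : s.foldl (fun E i => bflip i E) (bflip i D) = Istk n := by simpa using hf
    have hih := ih (bflip i D) hb' hf'
    show n - 1 ≤ aB D + (encStep D i :: enc (bflip i D) s).countP (fun x => x.isLeft)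
    by_cases hcr : aB (bflip i D) = aB D + 1
    · rw [encStep, if_pos hcr]
      rw [List.countP_cons]
      simp only [Sum.isLeft_inl, if_true]
      omega
    · rw [encStep, if_neg hcr]
      rw [List.countP_cons]
      have := aB_bflip_notcr i D h1 h2 hcr
      simp only [Sum.isLeft_inr, Bool.false_eq_true, if_false]
      omega

lemma enc_get : ∀ (s : List ℕ) (D : BStack) (t : ℕ) (sym : ℕ ⊕ ℕ),
    (∀ i ∈ s, 1 ≤ i ∧ i ≤ D.length) →
    (enc D s)[t]? = some sym →
    (∀ r, sym = Sum.inl r → r < aB D + t + 1) ∧ (∀ i', sym = Sum.inr i' → i' ∈ s) := by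
  intro s
  induction s with
  | nil => intro D t sym _ hg; simp [enc] at hg
  | cons i s ih =>
    intro D t sym hb hg
    have h1 : 1 ≤ i := (hb i (by simp)).1
    have h2 : i ≤ D.length := (hb i (by simp)).2
    have hb' : ∀ i' ∈ s, 1 ≤ i' ∧ i' ≤ (bflip i D).length := by
      intro i' hi'
      rw [length_bflip]
      exact hb i' (by simp [hi'])
    cases t with
    | zero =>
      have hsym : sym = encStep D i := by
        rw [show enc D (i :: s) = encStep D i :: enc (bflip i D) s from rfl] at hg
        simp at hg
        exact hg.symm
      constructor
      · intro r hr
        rw [hsym, encStep] at hr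
        by_cases hcr : aB (bflip i D) = aB D + 1
        · rw [if_pos hcr] at hr
          have hmem := creating_mem i D h1 h2 hcr
          have hlt : (truePos (adjSeq (bflip i D))).idxOf (i-1)
              < (truePos (adjSeq (bflip i D))).length := List.idxOf_lt_length_iff.mpr hmem
          rw [length_truePos] at hlt
          have : (adjSeq (bflip i D)).count true = aB (bflip i D) := rfl
          simp at hr
          omega
        · rw [if_neg hcr] at hr
          simp at hr
      · intro i' hi'
        rw [hsym, encStep] at hi'
        by_cases hcr : aB (bflip i D) = aB D + 1
        · rw [if_pos hcr] at hi'; simp at hi'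
        · rw [if_neg hcr] at hi'
          simp at hi'
          simp [hi']
    | succ t =>
      have hg' : (enc (bflip i D) s)[t]? = some sym := by
        rw [show enc D (i :: s) = encStep D i :: enc (bflip i D) s from rfl] at hg
        simpa using hg
      obtain ⟨hl, hrr⟩ := ih (bflip i D) t sym hb' hg'
      refine ⟨?_, fun i' hi' => List.mem_cons_of_mem _ (hrr i' hi')⟩
      intro r hr
      have := hl r hr
      have := aB_bflip_le i D h1 h2
      omega

end PK

namespace PK

lemma toBStack_length {n : ℕ} (π : Equiv.Perm (Fin n)) (w : Fin n → Bool) :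
    (toBStack π w).length = n := by simp [toBStack]

lemma toBStack_perm {n : ℕ} (π : Equiv.Perm (Fin n)) (w : Fin n → Bool) :
    ((toBStack π w).map Prod.fst).Perm ((List.range n).map (· + 1)) := by
  have e1 : (toBStack π w).map Prod.fst
      = ((List.finRange n).map π).map (fun a : Fin n => (a : ℕ) + 1) := by
    simp only [toBStack, List.map_map]
    rfl
  have e3 : (List.range n).map (· + 1) = (List.finRange n).map (fun a : Fin n => (a : ℕ) + 1) := by
    apply List.ext_getElem <;> simp
  rw [e1, e3]
  exact (Equiv.Perm.map_finRange_perm π).map _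

lemma toBStack_inj {n : ℕ} {π π' : Equiv.Perm (Fin n)} {w w' : Fin n → Bool}
    (h : toBStack π w = toBStack π' w') : π = π' ∧ w = w' := by
  unfold toBStack at h
  rw [List.map_inj_left] at h
  constructor
  · ext j
    have := h j (List.mem_finRange j)
    simp only [Prod.mk.injEq] at this
    omega
  · funext j
    have := h j (List.mem_finRange j)
    simp only [Prod.mk.injEq] at this
    exact this.2

lemma exists_sortSeq {n : ℕ} (π : Equiv.Perm (Fin n)) (w : Fin n → Bool) (M : ℕ)
    (hg : gB (toBStack π w) ≤ M) :
    ∃ s : List ℕ, (∀ i ∈ s, 1 ≤ i ∧ i ≤ n) ∧ s.length ≤ M ∧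
      s.foldl (fun D i => bflip i D) (toBStack π w) = Istk n := by
  set C := toBStack π w with hCdef
  have hlen : C.length = n := toBStack_length π w
  have hne : {m | ∃ s : List ℕ, (∀ i ∈ s, 1 ≤ i ∧ i ≤ C.length) ∧ s.length = m ∧
      s.foldl (fun D i => bflip i D) C = Istk C.length}.Nonempty := by
    obtain ⟨s, hb, hf⟩ := sortable n C hlen (toBStack_perm π w)
    exact ⟨s.length, s, by rw [hlen]; exact hb, rfl, by rw [hlen]; exact hf⟩
  have hmem := Nat.sInf_mem hne
  obtain ⟨s, hb, hlens, hf⟩ := hmem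
  refine ⟨s, by rw [← hlen]; exact hb, ?_, by rw [← hlen]; exact hf⟩
  rw [hlens]
  exact hg

/-- positions of `inr` symbols -/
def rPos (e : List (ℕ ⊕ ℕ)) : List ℕ := truePos (e.map Sum.isRight)

lemma count_true_map (l : List (ℕ ⊕ ℕ)) (f : ℕ ⊕ ℕ → Bool) :
    (l.map f).count true = l.countP f := by
  induction l with
  | nil => rfl
  | cons x l ih =>
    rw [List.map_cons, List.count_cons, List.countP_cons, ih]
    cases hf : f x <;> simp [hf]

lemma length_rPos (e : List (ℕ ⊕ ℕ)) : (rPos e).length = e.countP Sum.isRight := by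
  rw [rPos, length_truePos, count_true_map]

lemma mem_rPos (e : List (ℕ ⊕ ℕ)) (p : ℕ) :
    p ∈ rPos e ↔ ∃ sym, e[p]? = some sym ∧ sym.isRight = true := by
  rw [rPos, mem_truePos, List.getElem?_map]
  cases hg : e[p]? with
  | none => simp
  | some sym => simp [hg]

lemma mem_rPos_lt (e : List (ℕ ⊕ ℕ)) (p : ℕ) (h : p ∈ rPos e) : p < e.length := by
  rw [mem_rPos] at h
  obtain ⟨sym, hs, _⟩ := h
  exact (List.getElem?_eq_some_iff.mp hs).1

lemma getD_lt_of (l : List ℕ) (j d bnd : ℕ) (hd : d < bnd) (h : ∀ x ∈ l, x < bnd) :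
    l.getD j d < bnd := by
  rcases lt_or_ge j l.length with hj | hj
  · rw [List.getD_eq_getElem l d hj]
    exact h _ (List.getElem_mem hj)
  · rw [List.getD_eq_default l d hj]
    exact hd

lemma prod_fin_factorial (m : ℕ) : (∏ t : Fin m, ((t : ℕ) + 1)) = m.factorial := by
  induction m with
  | zero => simp
  | succ m ih => rw [Fin.prod_univ_castSucc]; simp [ih, Nat.factorial_succ, Nat.mul_comm]

end PK

namespace PK

lemma getD_get? {α : Type*} (l : List α) (t : ℕ) (d sym : α) (h : l[t]? = some sym) :
    l.getD t d = sym := by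
  rw [List.getD_eq_getElem?_getD, h]
  rfl

lemma card_fast_le (n k : ℕ) (hn : 1 ≤ n) :
    Nat.card {pw : Equiv.Perm (Fin n) × (Fin n → Bool) //
      aB (toBStack pw.1 pw.2) = 0 ∧ gB (toBStack pw.1 pw.2) ≤ n - 1 + k} ≤
    (n + k) * (n + k) ^ k * (n + 1) ^ k * (n - 1 + k).factorial := by
  classical
  set m := n - 1 + k with hm
  have hm1 : m + 1 = n + k := by omega
  set ST := {pw : Equiv.Perm (Fin n) × (Fin n → Bool) //
      aB (toBStack pw.1 pw.2) = 0 ∧ gB (toBStack pw.1 pw.2) ≤ n - 1 + k} with hST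
  -- the chosen sorting sequence and its encoding
  have hex : ∀ x : ST, ∃ s : List ℕ, (∀ i ∈ s, 1 ≤ i ∧ i ≤ n) ∧ s.length ≤ m ∧
      s.foldl (fun D i => bflip i D) (toBStack x.1.1 x.1.2) = Istk n :=
    fun x => exists_sortSeq x.1.1 x.1.2 m x.2.2
  set e : ST → List (ℕ ⊕ ℕ) :=
    fun x => enc (toBStack x.1.1 x.1.2) (hex x).choose with he
  have hsb : ∀ x : ST, ∀ i ∈ (hex x).choose, 1 ≤ i ∧ i ≤ (toBStack x.1.1 x.1.2).length := by
    intro x i hi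
    rw [toBStack_length]
    exact (hex x).choose_spec.1 i hi
  have hsf : ∀ x : ST, (hex x).choose.foldl (fun D i => bflip i D) (toBStack x.1.1 x.1.2)
      = Istk n := fun x => (hex x).choose_spec.2.2
  have hdec : ∀ x : ST, dec n (e x) = toBStack x.1.1 x.1.2 :=
    fun x => dec_enc n (hex x).choose _ (hsb x) (hsf x)
  have hlen : ∀ x : ST, (e x).length ≤ m := by
    intro x
    rw [he, enc_length]
    exact (hex x).choose_spec.2.1
  have hinr : ∀ x : ST, (e x).countP Sum.isRight ≤ k := by
    intro x
    have h1 : n - 1 ≤ aB (toBStack x.1.1 x.1.2) + (e x).countP (fun s => s.isLeft) :=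
      enc_countInl n (hex x).choose _ (hsb x) (hsf x)
    rw [x.2.1] at h1
    have h2 := List.length_eq_countP_add_countP (l := e x) (p := fun s => s.isLeft)
    have h3 : (e x).countP (fun s => ¬ s.isLeft) = (e x).countP Sum.isRight := by
      apply List.countP_congr
      intro s _
      cases s <;> simp
    rw [h3] at h2
    have h4 := hlen x
    omega
  have hinl : ∀ x : ST, ∀ (t : ℕ) r, (e x)[t]? = some (Sum.inl r) → r ≤ t := by
    intro x t r hg
    have := (enc_get (hex x).choose _ t _ (hsb x) hg).1 r rfl
    rw [x.2.1] at this
    omega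
  have hval : ∀ x : ST, ∀ (t : ℕ) i, (e x)[t]? = some (Sum.inr i) → 1 ≤ i ∧ i ≤ n := by
    intro x t i hg
    have := (enc_get (hex x).choose _ t _ (hsb x) hg).2 i rfl
    exact (hex x).choose_spec.1 i this
  -- the injection
  set G : ST → (Fin (m+1)) × (Fin k → Fin (m+1)) × (Fin k → Fin (n+1)) ×
      (∀ t : Fin m, Fin ((t : ℕ)+1)) :=
    fun x => (⟨(e x).length, by have := hlen x; omega⟩,
      fun j => ⟨(rPos (e x)).getD j m, by
        refine getD_lt_of _ _ _ _ (by omega) ?_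
        intro p hp
        have := mem_rPos_lt _ p hp
        have := hlen x
        omega⟩,
      fun j => ⟨((e x).getD ((rPos (e x)).getD (j : ℕ) m) (Sum.inl 0)).getRight?.getD 0, by
        rcases lt_or_ge (j : ℕ) (rPos (e x)).length with hj | hj
        · have hmem : (rPos (e x)).getD (j : ℕ) m ∈ rPos (e x) := by
            rw [List.getD_eq_getElem _ _ hj]
            exact List.getElem_mem hj
          obtain ⟨sym, hg, hR⟩ := (mem_rPos _ _).mp hmem
          rw [getD_get? _ _ _ _ hg]
          cases sym with
          | inl r => simp at hR
          | inr i =>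
            have := hval x _ i hg
            simp only [Sum.getRight?]
            simp
            omega
        · rw [List.getD_eq_default _ _ hj,
            List.getD_eq_default (e x) (Sum.inl 0) (hlen x)]
          simp⟩,
      fun t => ⟨((e x).getD (t : ℕ) (Sum.inr 0)).getLeft?.getD 0, by
        rcases hg : (e x)[(t : ℕ)]? with _ | sym
        · rw [List.getD_eq_default _ _ (List.getElem?_eq_none_iff.mp hg)]
          simp
        · rw [getD_get? _ _ _ _ hg]
          cases sym with
          | inl r =>
            have := hinl x _ r hg
            simp only [Sum.getLeft?]
            simp
            omega
          | inr i => simp⟩) with hG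
  have hGinj : Function.Injective G := by
    intro x y hxy
    rw [hG] at hxy
    simp only [Prod.mk.injEq] at hxy
    obtain ⟨h1, h2, h3, h4⟩ := hxy
    have hlen_eq : (e x).length = (e y).length := by
      have := congrArg Fin.val h1
      simpa using this
    have hpos_eq : rPos (e x) = rPos (e y) := by
      refine listEq_of_getD _ _ k m ?_ ?_ ?_ ?_ ?_
      · rw [length_rPos]; exact hinr x
      · rw [length_rPos]; exact hinr y
      · intro p hp; have := mem_rPos_lt _ p hp; have := hlen x; omega
      · intro p hp; have := mem_rPos_lt _ p hp; have := hlen y; omega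
      · intro j hj
        have := congrFun h2 ⟨j, hj⟩
        simpa using congrArg Fin.val this
    have hee : e x = e y := by
      apply List.ext_getElem?
      intro t
      rcases lt_or_ge t (e x).length with ht | ht
      · obtain ⟨symx, hgx⟩ : ∃ s, (e x)[t]? = some s := by
          exact ⟨_, List.getElem?_eq_getElem ht⟩
        obtain ⟨symy, hgy⟩ : ∃ s, (e y)[t]? = some s := by
          exact ⟨_, List.getElem?_eq_getElem (by omega)⟩
        rw [hgx, hgy]
        by_cases hmt : t ∈ rPos (e x)
        · -- both are inr
          obtain ⟨sx, hgx', hRx⟩ := (mem_rPos _ _).mp hmt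
          rw [hgx] at hgx'
          obtain ⟨sy, hgy', hRy⟩ := (mem_rPos _ _).mp (hpos_eq ▸ hmt)
          rw [hgy] at hgy'
          obtain rfl : symx = sx := Option.some.inj hgx'
          obtain rfl : symy = sy := Option.some.inj hgy'
          obtain ⟨ix, rfl⟩ : ∃ i, symx = Sum.inr i := by
            cases symx with
            | inl r => simp at hRx
            | inr i => exact ⟨i, rfl⟩
          obtain ⟨iy, rfl⟩ : ∃ i, symy = Sum.inr i := by
            cases symy with
            | inl r => simp at hRy
            | inr i => exact ⟨i, rfl⟩
          have hjlt : (rPos (e x)).idxOf t < (rPos (e x)).length :=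
            List.idxOf_lt_length_iff.mpr hmt
          have hjk : (rPos (e x)).idxOf t < k := by
            have := hinr x
            rw [← length_rPos] at this
            omega
        -- evaluate h3 at the index of t
          have h3' := congrFun h3 ⟨(rPos (e x)).idxOf t, hjk⟩
          have hx5 : (rPos (e x)).getD ((rPos (e x)).idxOf t) m = t :=
            getD_indexOf _ _ _ hmt
          have hy5 : (rPos (e y)).getD ((rPos (e x)).idxOf t) m = t := by
            rw [← hpos_eq]
            exact hx5
          have := congrArg Fin.val h3'
          simp only [hx5, hy5] at this
          rw [getD_get? _ _ _ _ hgx, getD_get? _ _ _ _ hgy] at this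
          simp at this
          rw [this]
        · -- both are inl
          have hmty : t ∉ rPos (e y) := by rw [← hpos_eq]; exact hmt
          obtain ⟨rx, rfl⟩ : ∃ r, symx = Sum.inl r := by
            cases symx with
            | inl r => exact ⟨r, rfl⟩
            | inr i => exact absurd ((mem_rPos _ _).mpr ⟨_, hgx, rfl⟩) hmt
          obtain ⟨ry, rfl⟩ : ∃ r, symy = Sum.inl r := by
            cases symy with
            | inl r => exact ⟨r, rfl⟩
            | inr i => exact absurd ((mem_rPos _ _).mpr ⟨_, hgy, rfl⟩) hmty
          have htm : t < m := by have := hlen x; omega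
          have h4' := congrFun h4 ⟨t, htm⟩
          have := congrArg Fin.val h4'
          simp only [Fin.val_mk] at this
          rw [getD_get? _ _ _ _ hgx, getD_get? _ _ _ _ hgy] at this
          simp at this
          rw [this]
      · rw [List.getElem?_eq_none_iff.mpr ht, List.getElem?_eq_none_iff.mpr (by omega)]
    have := hdec x
    rw [hee, hdec y] at this
    obtain ⟨hp, hw⟩ := toBStack_inj this
    apply Subtype.ext
    apply Prod.ext <;> simp [hp, hw]
  have hcard := Nat.card_le_card_of_injective G hGinj
  have hcardT : Nat.card ((Fin (m+1)) × (Fin k → Fin (m+1)) × (Fin k → Fin (n+1)) ×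
      (∀ t : Fin m, Fin ((t : ℕ)+1))) = (m+1) * (m+1)^k * (n+1)^k * m.factorial := by
    rw [Nat.card_eq_fintype_card]
    rw [Fintype.card_prod, Fintype.card_prod, Fintype.card_prod, Fintype.card_fun,
      Fintype.card_fun, Fintype.card_pi]
    simp only [Fintype.card_fin]
    rw [prod_fin_factorial]
    ring
  rw [hcardT] at hcard
  rw [hm1] at hcard
  exact hcard

end PK

namespace PK

lemma adjPair_cases (a c : ℕ) (u v : Bool) (h : adjPair (a, u) (c, v) = true) :
    u = v ∧ ((u = false ∧ c = a + 1) ∨ (u = true ∧ a = c + 1)) := by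
  cases u <;> cases v <;> simp [adjPair] at h ⊢ <;> omega

lemma toBStack_getD {n : ℕ} (π : Equiv.Perm (Fin n)) (w : Fin n → Bool) (j : ℕ) (hj : j < n) :
    (toBStack π w).getD j (0, false) = ((π ⟨j, hj⟩ : ℕ) + 1, w ⟨j, hj⟩) := by
  have hl : j < (toBStack π w).length := by rw [toBStack_length]; exact hj
  rw [List.getD_eq_getElem _ _ hl]
  simp only [toBStack, List.getElem_map]
  have hfr : (List.finRange n)[j]'(by simpa using hj) = ⟨j, hj⟩ := by
    apply Fin.ext
    simp
  rw [hfr]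

lemma adjSeq_getD (C : BStack) (j : ℕ) (h : j + 1 < C.length) :
    (adjSeq C).getD j false = adjPair (C.getD j (0, false)) (C.getD (j+1) (0, false)) := by
  have hlt : j < (adjSeq C).length := by rw [length_adjSeq]; omega
  rw [List.getD_eq_getElem _ _ hlt]
  simp only [adjSeq, List.getElem_map, List.getElem_zip, List.getElem_tail]
  have h1 : j < C.length := by omega
  rw [List.getD_eq_getElem _ _ h1, List.getD_eq_getElem _ _ h]

lemma exists_adj {n : ℕ} (π : Equiv.Perm (Fin n)) (w : Fin n → Bool)
    (h : aB (toBStack π w) ≠ 0) :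
    ∃ j, j + 1 < n ∧ (adjSeq (toBStack π w)).getD j false = true := by
  have : true ∈ adjSeq (toBStack π w) := by
    rw [← List.count_pos_iff]
    unfold aB at h
    omega
  obtain ⟨j, hj, hjv⟩ := List.mem_iff_getElem.mp this
  have hj2 : j + 1 < n := by
    have := length_adjSeq (toBStack π w)
    rw [toBStack_length] at this
    omega
  refine ⟨j, hj2, ?_⟩
  rw [List.getD_eq_getElem _ _ hj]
  exact hjv

lemma card_adjj (n j : ℕ) (hj : j + 1 < n) :
    2 * ((n - 1) * Nat.card {pw : Equiv.Perm (Fin n) × (Fin n → Bool) //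
      (adjSeq (toBStack pw.1 pw.2)).getD j false = true}) ≤ n.factorial * 2 ^ n := by
  classical
  have hjlt : j < n := by omega
  set jc : Fin n := ⟨j, hjlt⟩ with hjc
  set js : Fin n := ⟨j + 1, hj⟩ with hjs
  have hne : jc ≠ js := by
    intro h
    have := congrArg Fin.val h
    simp [hjc, hjs] at this
  -- structure of an adjacent pair
  have hstruct : ∀ pw : Equiv.Perm (Fin n) × (Fin n → Bool),
      (adjSeq (toBStack pw.1 pw.2)).getD j false = true →
      pw.2 jc = pw.2 js ∧ ((pw.2 jc = false ∧ (pw.1 js : ℕ) = (pw.1 jc : ℕ) + 1) ∨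
        (pw.2 jc = true ∧ (pw.1 jc : ℕ) = (pw.1 js : ℕ) + 1)) := by
    intro pw hQ
    rw [hjc, hjs]
    rw [adjSeq_getD _ _ (by rw [toBStack_length]; omega), toBStack_getD _ _ j hjlt,
      toBStack_getD _ _ (j+1) hj] at hQ
    obtain ⟨h1, h2⟩ := adjPair_cases _ _ _ _ hQ
    refine ⟨h1, ?_⟩
    rcases h2 with ⟨hu, hc⟩ | ⟨hu, hc⟩
    · exact Or.inl ⟨hu, by omega⟩
    · exact Or.inr ⟨hu, by omega⟩
  set ST := {pw : Equiv.Perm (Fin n) × (Fin n → Bool) //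
      (adjSeq (toBStack pw.1 pw.2)).getD j false = true} with hST
  set F : ST × {t : Fin n // t ≠ jc} × Bool → Equiv.Perm (Fin n) × (Fin n → Bool) :=
    fun z => (z.1.1.1 * Equiv.swap js z.2.1.1, Function.update z.1.1.2 js z.2.2) with hF
  have hFinj : Function.Injective F := by
    rintro ⟨⟨⟨π, w⟩, hx⟩, ⟨t, ht⟩, b⟩ ⟨⟨⟨π', w'⟩, hx'⟩, ⟨t', ht'⟩, b'⟩ heq
    rw [hF] at heq
    simp only [Prod.mk.injEq] at heq
    obtain ⟨hπ, hw⟩ := heq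
    obtain ⟨hw1, hπ1⟩ := hstruct (π, w) hx
    obtain ⟨hw1', hπ1'⟩ := hstruct (π', w') hx'
    simp only at hw1 hπ1 hw1' hπ1' ⊢
    -- w at jc
    have hwjc : w jc = w' jc := by
      have := congrFun hw jc
      rwa [Function.update_of_ne hne, Function.update_of_ne hne] at this
    -- π at jc
    have hπjc : π jc = π' jc := by
      have := congrArg (fun σ => σ jc) hπ
      simp only [Equiv.Perm.mul_apply] at this
      rwa [Equiv.swap_apply_of_ne_of_ne hne (Ne.symm ht),
        Equiv.swap_apply_of_ne_of_ne hne (Ne.symm ht')] at this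
    -- π at js
    have hπjs : π js = π' js := by
      apply Fin.ext
      have hv : (π jc : ℕ) = (π' jc : ℕ) := by rw [hπjc]
      rcases hπ1 with ⟨hu, hc⟩ | ⟨hu, hc⟩ <;> rcases hπ1' with ⟨hu', hc'⟩ | ⟨hu', hc'⟩
      · omega
      · rw [hwjc, hu'] at hu; exact absurd hu (by simp)
      · rw [hwjc, hu'] at hu; exact absurd hu (by simp)
      · omega
    -- recover t
    have htt : t = t' := by
      have h1 : (π * Equiv.swap js t) t = π js := by
        simp [Equiv.swap_apply_right]
      have h2 : (π' * Equiv.swap js t') t' = π' js := by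
        simp [Equiv.swap_apply_right]
      have h3 : t = (π * Equiv.swap js t)⁻¹ (π js) := by
        rw [← h1]; simp
      have h4 : t' = (π' * Equiv.swap js t')⁻¹ (π' js) := by
        rw [← h2]; simp
      rw [h3, h4, hπ, hπjs]
    subst htt
    have hππ : π = π' := mul_right_cancel hπ
    have hwj : w js = w' js := by
      have e1 : w js = w jc := by
        rw [hw1]
      have e2 : w' js = w' jc := by
        rw [hw1']
      rw [e1, e2, hwjc]
    have hww : w = w' := by
      funext z
      by_cases hz : z = js
      · rw [hz]; exact hwj
      · have := congrFun hw z
        rwa [Function.update_of_ne hz, Function.update_of_ne hz] at this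
    have hbb : b = b' := by
      have := congrFun hw js
      rwa [Function.update_self, Function.update_self] at this
    simp [hππ, hww, hbb]
  have hcard := Nat.card_le_card_of_injective F hFinj
  have h1 : Nat.card (ST × {t : Fin n // t ≠ jc} × Bool)
      = Nat.card ST * ((n - 1) * 2) := by
    rw [Nat.card_prod, Nat.card_prod]
    congr 2
    · rw [hjc, Nat.card_eq_fintype_card, Fintype.card_subtype_compl, Fintype.card_subtype_eq,
        Fintype.card_fin]
    · simp
  have h2 : Nat.card (Equiv.Perm (Fin n) × (Fin n → Bool)) = n.factorial * 2 ^ n := by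
    rw [Nat.card_eq_fintype_card]
    simp [Fintype.card_prod, Fintype.card_perm, Fintype.card_fun]
  rw [h1, h2] at hcard
  calc 2 * ((n-1) * Nat.card ST) = Nat.card ST * ((n-1) * 2) := by ring
  _ ≤ n.factorial * 2 ^ n := hcard

lemma card_noadj (n : ℕ) (hn : 2 ≤ n) :
    n.factorial * 2 ^ n ≤ 2 * Nat.card {pw : Equiv.Perm (Fin n) × (Fin n → Bool) //
      aB (toBStack pw.1 pw.2) = 0} := by
  classical
  have htot : Fintype.card (Equiv.Perm (Fin n) × (Fin n → Bool)) = n.factorial * 2 ^ n := by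
    simp [Fintype.card_prod, Fintype.card_perm, Fintype.card_fun]
  have hcompl : Fintype.card {pw : Equiv.Perm (Fin n) × (Fin n → Bool) //
      ¬ (aB (toBStack pw.1 pw.2) = 0)} = n.factorial * 2 ^ n -
      Fintype.card {pw : Equiv.Perm (Fin n) × (Fin n → Bool) // aB (toBStack pw.1 pw.2) = 0} := by
    rw [Fintype.card_subtype_compl, htot]
  -- bound the number of stacks with an adjacency
  have hbad : 2 * Fintype.card {pw : Equiv.Perm (Fin n) × (Fin n → Bool) //
      ¬ (aB (toBStack pw.1 pw.2) = 0)} ≤ n.factorial * 2 ^ n := by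
    have hsub : (Finset.univ.filter (fun pw : Equiv.Perm (Fin n) × (Fin n → Bool) =>
        ¬ (aB (toBStack pw.1 pw.2) = 0))) ⊆
        (Finset.range (n-1)).biUnion (fun j => Finset.univ.filter
          (fun pw : Equiv.Perm (Fin n) × (Fin n → Bool) =>
            (adjSeq (toBStack pw.1 pw.2)).getD j false = true)) := by
      intro pw hpw
      rw [Finset.mem_filter] at hpw
      obtain ⟨j, hj1, hj2⟩ := exists_adj pw.1 pw.2 hpw.2
      rw [Finset.mem_biUnion]
      exact ⟨j, Finset.mem_range.mpr (by omega), Finset.mem_filter.mpr ⟨Finset.mem_univ _, hj2⟩⟩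
    have hcb := Finset.card_le_card hsub
    have hcb2 := Finset.card_biUnion_le (s := Finset.range (n-1))
      (t := fun j => Finset.univ.filter
        (fun pw : Equiv.Perm (Fin n) × (Fin n → Bool) =>
          (adjSeq (toBStack pw.1 pw.2)).getD j false = true))
    have hper : ∀ j ∈ Finset.range (n-1),
        2 * ((n-1) * (Finset.univ.filter
          (fun pw : Equiv.Perm (Fin n) × (Fin n → Bool) =>
            (adjSeq (toBStack pw.1 pw.2)).getD j false = true)).card) ≤
          n.factorial * 2 ^ n := by
      intro j hjr
      rw [Finset.mem_range] at hjr
      have := card_adjj n j (by omega)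
      rwa [Nat.card_eq_fintype_card, Fintype.card_subtype] at this
    -- sum up
    have hsum : 2 * ((n-1) * (Finset.range (n-1)).sum (fun j => (Finset.univ.filter
        (fun pw : Equiv.Perm (Fin n) × (Fin n → Bool) =>
          (adjSeq (toBStack pw.1 pw.2)).getD j false = true)).card)) ≤
        (n-1) * (n.factorial * 2 ^ n) := by
      rw [Finset.mul_sum, Finset.mul_sum]
      calc ((Finset.range (n-1)).sum fun j => 2 * ((n-1) * _)) ≤
          (Finset.range (n-1)).sum (fun _ => n.factorial * 2 ^ n) := by
            exact Finset.sum_le_sum (fun j hj => hper j hj)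
        _ = (n-1) * (n.factorial * 2 ^ n) := by
            rw [Finset.sum_const, Finset.card_range]; ring
    have hfc : Fintype.card {pw : Equiv.Perm (Fin n) × (Fin n → Bool) //
        ¬ (aB (toBStack pw.1 pw.2) = 0)} = (Finset.univ.filter
          (fun pw : Equiv.Perm (Fin n) × (Fin n → Bool) =>
            ¬ (aB (toBStack pw.1 pw.2) = 0))).card := Fintype.card_subtype _
    have hn1 : 0 < n - 1 := by omega
    -- combine
    have : (n-1) * (2 * Fintype.card {pw : Equiv.Perm (Fin n) × (Fin n → Bool) //
        ¬ (aB (toBStack pw.1 pw.2) = 0)}) ≤ (n-1) * (n.factorial * 2 ^ n) := by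
      calc (n-1) * (2 * Fintype.card {pw : Equiv.Perm (Fin n) × (Fin n → Bool) //
            ¬ (aB (toBStack pw.1 pw.2) = 0)})
          = 2 * ((n-1) * (Finset.univ.filter
            (fun pw : Equiv.Perm (Fin n) × (Fin n → Bool) =>
              ¬ (aB (toBStack pw.1 pw.2) = 0))).card) := by rw [hfc]; ring
        _ ≤ 2 * ((n-1) * (Finset.range (n-1)).sum (fun j => (Finset.univ.filter
            (fun pw : Equiv.Perm (Fin n) × (Fin n → Bool) =>
              (adjSeq (toBStack pw.1 pw.2)).getD j false = true)).card)) := by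
            have := le_trans hcb hcb2
            exact Nat.mul_le_mul_left _ (Nat.mul_le_mul_left _ this)
        _ ≤ (n-1) * (n.factorial * 2 ^ n) := hsum
    exact Nat.le_of_mul_le_mul_left this hn1
  have hle : Fintype.card {pw : Equiv.Perm (Fin n) × (Fin n → Bool) //
      aB (toBStack pw.1 pw.2) = 0} ≤ n.factorial * 2 ^ n := by
    rw [← htot]
    exact Fintype.card_subtype_le _
  rw [Nat.card_eq_fintype_card]
  omega

end PK

namespace PK

lemma fact_add_le (a b : ℕ) : (a + b).factorial ≤ a.factorial * (a + b) ^ b := by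
  induction b with
  | zero => simp
  | succ b ih =>
    have h1 : a + (b + 1) = (a + b) + 1 := rfl
    rw [h1, Nat.factorial_succ]
    calc (a + b + 1) * (a + b).factorial
        ≤ (a + b + 1) * (a.factorial * (a + b) ^ b) := Nat.mul_le_mul_left _ ih
      _ ≤ (a + b + 1) * (a.factorial * (a + b + 1) ^ b) :=
          Nat.mul_le_mul_left _ (Nat.mul_le_mul_left _ (Nat.pow_le_pow_left (by omega) b))
      _ = a.factorial * (a + b + 1) ^ (b + 1) := by ring

lemma arith_main (n k : ℕ) (hn : 16 ≤ n) (hk : 16 * k ≤ n) (hpow : n ^ (4 * k) ≤ 2 ^ n) :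
    4 * ((n + k) * (n + k) ^ k * (n + 1) ^ k * (n - 1 + k).factorial) < n.factorial * 2 ^ n := by
  have hfacpos : 0 < n.factorial := Nat.factorial_pos n
  have h10 : 2 ^ n = 4 * 2 ^ (n - 2) := by
    calc 2 ^ n = 2 ^ (n - 2 + 2) := by congr 1; omega
      _ = 4 * 2 ^ (n - 2) := by rw [pow_add]; ring
  rcases Nat.eq_zero_or_pos k with hk0 | hk1
  · subst hk0
    have h1 : (n + 0) * (n + 0) ^ 0 * (n + 1) ^ 0 * (n - 1 + 0).factorial = n.factorial := by
      simp only [pow_zero, Nat.add_zero, Nat.mul_one, Nat.one_mul]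
      have h2 : n - 1 + 1 = n := by omega
      rw [← h2, Nat.factorial_succ, h2]
    rw [h1, h10]
    have h3 : (4 : ℕ) < 4 * 2 ^ (n - 2) := by
      have : (1 : ℕ) < 2 ^ (n - 2) := Nat.one_lt_two_pow (by omega)
      omega
    calc 4 * n.factorial = n.factorial * 4 := by ring
      _ < n.factorial * (4 * 2 ^ (n-2)) := (mul_lt_mul_iff_right₀ hfacpos).mpr h3
  · -- k ≥ 1
    have h5 : (n - 1 + k).factorial ≤ n.factorial * (n + k) ^ (k - 1) := by
      have h2 : n - 1 + k = n + (k - 1) := by omega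
      rw [h2]
      exact le_trans (fact_add_le n (k - 1))
        (Nat.mul_le_mul_left _ (Nat.pow_le_pow_left (by omega) _))
    have hA : (n + k) * (n + k) ^ k * (n + 1) ^ k * (n - 1 + k).factorial
        ≤ n.factorial * ((n + 1) ^ k * (n + k) ^ (2 * k)) := by
      calc (n + k) * (n + k) ^ k * (n + 1) ^ k * (n - 1 + k).factorial
          ≤ (n + k) * (n + k) ^ k * (n + 1) ^ k * (n.factorial * (n + k) ^ (k - 1)) :=
            Nat.mul_le_mul_left _ h5
        _ = n.factorial * ((n + 1) ^ k * ((n + k) ^ (k + 1) * (n + k) ^ (k - 1))) := by ring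
        _ = n.factorial * ((n + 1) ^ k * (n + k) ^ (2 * k)) := by
            rw [← pow_add, show k + 1 + (k - 1) = 2 * k from by omega]
    have h6 : (n + 1) * (n + k) ^ 2 ≤ 2 * n ^ 3 := by
      have e16a : 16 * (n + 1) ≤ 17 * n := by omega
      have e16b : 16 * (n + k) ≤ 17 * n := by omega
      have e1 : 4096 * ((n + 1) * (n + k) ^ 2) ≤ 4913 * n ^ 3 := by
        calc 4096 * ((n + 1) * (n + k) ^ 2)
            = (16 * (n + 1)) * ((16 * (n + k)) * (16 * (n + k))) := by ring
          _ ≤ (17 * n) * ((17 * n) * (17 * n)) :=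
              Nat.mul_le_mul e16a (Nat.mul_le_mul e16b e16b)
          _ = 4913 * n ^ 3 := by ring
      nlinarith [e1, pow_pos (show 0 < n by omega) 3]
    have h7 : (n + 1) ^ k * (n + k) ^ (2 * k) ≤ 2 ^ k * n ^ (3 * k) := by
      calc (n + 1) ^ k * (n + k) ^ (2 * k) = ((n + 1) * (n + k) ^ 2) ^ k := by
            rw [mul_pow, ← pow_mul, Nat.mul_comm 2 k]
        _ ≤ (2 * n ^ 3) ^ k := Nat.pow_le_pow_left h6 k
        _ = 2 ^ k * n ^ (3 * k) := by rw [mul_pow, ← pow_mul, Nat.mul_comm 3 k]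
    have h8 : (2 ^ k * n ^ (3 * k)) ^ 4 < (2 ^ (n - 2)) ^ 4 := by
      have e1 : (2 ^ k * n ^ (3 * k)) ^ 4 = 2 ^ (4 * k) * (n ^ (4 * k)) ^ 3 := by
        rw [mul_pow, ← pow_mul, ← pow_mul, ← pow_mul]
        congr 1 <;> [skip; congr 1] <;> ring
      rw [e1]
      calc 2 ^ (4 * k) * (n ^ (4 * k)) ^ 3 ≤ 2 ^ (4 * k) * (2 ^ n) ^ 3 :=
            Nat.mul_le_mul_left _ (Nat.pow_le_pow_left hpow 3)
        _ = 2 ^ (4 * k + n * 3) := by rw [← pow_mul, ← pow_add]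
        _ < 2 ^ ((n - 2) * 4) := Nat.pow_lt_pow_right one_lt_two (by omega)
        _ = (2 ^ (n - 2)) ^ 4 := by rw [pow_mul]
    have h9 : 2 ^ k * n ^ (3 * k) < 2 ^ (n - 2) :=
      lt_of_pow_lt_pow_left₀ 4 (Nat.zero_le _) h8
    have hA2 : (n + k) * (n + k) ^ k * (n + 1) ^ k * (n - 1 + k).factorial
        < n.factorial * 2 ^ (n - 2) :=
      lt_of_le_of_lt hA ((mul_lt_mul_iff_right₀ hfacpos).mpr (lt_of_le_of_lt h7 h9))
    calc 4 * ((n + k) * (n + k) ^ k * (n + 1) ^ k * (n - 1 + k).factorial)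
        < 4 * (n.factorial * 2 ^ (n - 2)) := by omega
      _ = n.factorial * (4 * 2 ^ (n - 2)) := by ring
      _ = n.factorial * 2 ^ n := by rw [← h10]

end PK


/-- For every integer `n ≥ 16`, the number of stacks of `n` burnt
pancakes that have no adjacency and can be sorted in at most `n − 1 + n/(4·log₂ n)`
flips is less than `(1/4)·n!·2^n`; consequently, at least half of the `n!·2^n/2` or
more stacks with no adjacency require more than `n − 1 + n/(4·log₂ n)` flips. -/
theorem few_noadjacency_stacks_sort_fast (n : ℕ) (hn : 16 ≤ n) :
    4 * Nat.card {pw : Equiv.Perm (Fin n) × (Fin n → Bool) //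
        aB (toBStack pw.1 pw.2) = 0 ∧
        (gB (toBStack pw.1 pw.2) : ℝ) ≤ (n : ℝ) - 1 + n / (4 * Real.logb 2 n)} <
      n.factorial * 2 ^ n ∧
    n.factorial * 2 ^ n ≤
      2 * Nat.card {pw : Equiv.Perm (Fin n) × (Fin n → Bool) //
        aB (toBStack pw.1 pw.2) = 0} ∧
    Nat.card {pw : Equiv.Perm (Fin n) × (Fin n → Bool) //
        aB (toBStack pw.1 pw.2) = 0} ≤
      2 * Nat.card {pw : Equiv.Perm (Fin n) × (Fin n → Bool) //
        aB (toBStack pw.1 pw.2) = 0 ∧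
        (n : ℝ) - 1 + n / (4 * Real.logb 2 n) < (gB (toBStack pw.1 pw.2) : ℝ)} := by
  classical
  set x : ℝ := (n : ℝ) / (4 * Real.logb 2 n) with hx
  set k : ℕ := ⌊x⌋₊ with hk
  have hL : 0 < Real.logb 2 n := by
    apply Real.logb_pos (by norm_num)
    have : (16 : ℝ) ≤ (n : ℝ) := by exact_mod_cast hn
    linarith
  have hxnn : 0 ≤ x := by
    apply div_nonneg (by positivity)
    linarith
  -- the key power inequality
  have hpow : n ^ (4 * k) ≤ 2 ^ n := by
    have h1 : (k : ℝ) ≤ x := Nat.floor_le hxnn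
    have h2 : (k : ℝ) * (4 * Real.logb 2 n) ≤ (n : ℝ) := by
      have h3 : 0 < 4 * Real.logb 2 n := by linarith
      calc (k : ℝ) * (4 * Real.logb 2 n) ≤ x * (4 * Real.logb 2 n) := by
            exact mul_le_mul_of_nonneg_right h1 (le_of_lt h3)
        _ = (n : ℝ) := by
            rw [hx]
            field_simp
    have h4 : Real.logb 2 ((n : ℝ) ^ (4 * k)) ≤ (n : ℕ) := by
      rw [Real.logb_pow]
      calc (4 * k : ℕ) * Real.logb 2 n = (k : ℝ) * (4 * Real.logb 2 n) := by
            push_cast; ring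
        _ ≤ (n : ℝ) := h2
    have h5 : (0 : ℝ) < (n : ℝ) ^ (4 * k) := by positivity
    have h6 : ((n : ℝ)) ^ (4 * k) ≤ (2 : ℝ) ^ ((n : ℕ) : ℝ) :=
      (Real.logb_le_iff_le_rpow (by norm_num) h5).mp h4
    have h7 : ((n ^ (4 * k) : ℕ) : ℝ) ≤ ((2 ^ n : ℕ) : ℝ) := by
      push_cast
      rw [← Real.rpow_natCast 2 n]
      exact h6
    exact_mod_cast h7
  have hk16 : 16 * k ≤ n := by
    have h1 : 2 ^ (16 * k) ≤ 2 ^ n := by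
      calc 2 ^ (16 * k) = 16 ^ (4 * k) := by
            rw [show (16 : ℕ) = 2 ^ 4 from rfl, ← pow_mul]
            congr 1
            ring
        _ ≤ n ^ (4 * k) := Nat.pow_le_pow_left hn _
        _ ≤ 2 ^ n := hpow
    exact (Nat.pow_le_pow_iff_right (by norm_num)).mp h1
  -- fast stacks satisfy the discrete bound
  have hgk : ∀ pw : Equiv.Perm (Fin n) × (Fin n → Bool),
      (gB (toBStack pw.1 pw.2) : ℝ) ≤ (n : ℝ) - 1 + x →
      gB (toBStack pw.1 pw.2) ≤ n - 1 + k := by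
    intro pw h
    have h1 : x < (k : ℝ) + 1 := Nat.lt_floor_add_one x
    have h2 : (gB (toBStack pw.1 pw.2) : ℝ) < ((n + k : ℕ) : ℝ) := by
      push_cast
      have : (1 : ℝ) ≤ (n : ℝ) := by
        have : (16 : ℝ) ≤ (n : ℝ) := by exact_mod_cast hn
        linarith
      linarith
    have h3 : gB (toBStack pw.1 pw.2) < n + k := by exact_mod_cast h2
    omega
  -- part 1
  have hpart1 : 4 * Nat.card {pw : Equiv.Perm (Fin n) × (Fin n → Bool) //
      aB (toBStack pw.1 pw.2) = 0 ∧
      (gB (toBStack pw.1 pw.2) : ℝ) ≤ (n : ℝ) - 1 + x} < n.factorial * 2 ^ n := by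
    have hsub : Nat.card {pw : Equiv.Perm (Fin n) × (Fin n → Bool) //
        aB (toBStack pw.1 pw.2) = 0 ∧
        (gB (toBStack pw.1 pw.2) : ℝ) ≤ (n : ℝ) - 1 + x} ≤
        Nat.card {pw : Equiv.Perm (Fin n) × (Fin n → Bool) //
        aB (toBStack pw.1 pw.2) = 0 ∧ gB (toBStack pw.1 pw.2) ≤ n - 1 + k} := by
      apply Nat.card_le_card_of_injective
        (fun y => (⟨y.1, ⟨y.2.1, hgk y.1 y.2.2⟩⟩ : {pw : Equiv.Perm (Fin n) × (Fin n → Bool) //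
          aB (toBStack pw.1 pw.2) = 0 ∧ gB (toBStack pw.1 pw.2) ≤ n - 1 + k}))
      intro a b hab
      simp only [Subtype.mk.injEq] at hab
      exact Subtype.ext hab
    have hb := PK.card_fast_le n k (by omega)
    have harith := PK.arith_main n k hn hk16 hpow
    omega
  have hpart2 := PK.card_noadj n (by omega)
  refine ⟨hpart1, hpart2, ?_⟩
  -- part 3
  have hsplit : Nat.card {pw : Equiv.Perm (Fin n) × (Fin n → Bool) //
      aB (toBStack pw.1 pw.2) = 0} =
      Nat.card {pw : Equiv.Perm (Fin n) × (Fin n → Bool) //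
        aB (toBStack pw.1 pw.2) = 0 ∧
        (gB (toBStack pw.1 pw.2) : ℝ) ≤ (n : ℝ) - 1 + x} +
      Nat.card {pw : Equiv.Perm (Fin n) × (Fin n → Bool) //
        aB (toBStack pw.1 pw.2) = 0 ∧
        (n : ℝ) - 1 + x < (gB (toBStack pw.1 pw.2) : ℝ)} := by
    have e1 : {pw : Equiv.Perm (Fin n) × (Fin n → Bool) //
        aB (toBStack pw.1 pw.2) = 0 ∧
        (gB (toBStack pw.1 pw.2) : ℝ) ≤ (n : ℝ) - 1 + x} ⊕
        {pw : Equiv.Perm (Fin n) × (Fin n → Bool) //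
        aB (toBStack pw.1 pw.2) = 0 ∧
        (n : ℝ) - 1 + x < (gB (toBStack pw.1 pw.2) : ℝ)} ≃
        {pw : Equiv.Perm (Fin n) × (Fin n → Bool) // aB (toBStack pw.1 pw.2) = 0} := by
      refine ⟨fun z => Sum.elim (fun a => ⟨a.1, a.2.1⟩) (fun a => ⟨a.1, a.2.1⟩) z,
        fun a => if h : (gB (toBStack a.1.1 a.1.2) : ℝ) ≤ (n : ℝ) - 1 + x then
          Sum.inl ⟨a.1, a.2, h⟩ else Sum.inr ⟨a.1, a.2, not_le.mp h⟩, ?_, ?_⟩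
      · rintro (⟨a, h1, h2⟩ | ⟨a, h1, h2⟩)
        · dsimp only [Sum.elim_inl]
          rw [dif_pos h2]
        · dsimp only [Sum.elim_inr]
          rw [dif_neg (not_le.mpr h2)]
      · rintro ⟨a, h1⟩
        dsimp only
        by_cases h : (gB (toBStack a.1 a.2) : ℝ) ≤ (n : ℝ) - 1 + x
        · rw [dif_pos h]
          rfl
        · rw [dif_neg h]
          rfl
    have := Nat.card_congr e1
    rw [Nat.card_sum] at this
    omega
  omega
end

section
/- For every positive integer n, the average over all n! permutations π of {1,…,n} of the minimum number of prefix reversals f(π) needed to sort π is at least n − 2. -/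
/-- A stack of unburnt pancakes: the list of pancake sizes from top to bottom. -/
abbrev UStack := List ℕ

/-- An `i`-flip (prefix reversal): reverse the order of the top `i` pancakes. -/
def uflip (i : ℕ) (C : UStack) : UStack := (C.take i).reverse ++ C.drop i

/-- The sorted stack `(1, 2, …, n)` from top to bottom. -/
def uId (n : ℕ) : UStack := (List.range n).map (· + 1)

/-- `C` is a stack of `n` unburnt pancakes: it is a permutation of `{1,…,n}`. -/
def IsUStack (n : ℕ) (C : UStack) : Prop := C.Perm ((List.range n).map (· + 1))

/-- `f C`: the minimum number of flips transforming `C` into the identity stack. -/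
noncomputable def fU (C : UStack) : ℕ :=
  sInf { m | ∃ s : List ℕ, (∀ i ∈ s, 1 ≤ i ∧ i ≤ C.length) ∧ s.length = m ∧
      s.foldl (fun D i => uflip i D) C = uId C.length }

/-- The stack of `n` unburnt pancakes determined by a permutation `π` of `Fin n`:
the pancake at the `j`-th position from the top has size `π j + 1`. -/
def toUStack {n : ℕ} (π : Equiv.Perm (Fin n)) : UStack :=
  (List.finRange n).map fun j => (π j : ℕ) + 1

/-- `a C`: the number of pairs of consecutive positions of `C` whose values differ by
exactly `1` (adjacencies), plus `1` if the pancake `n` lies at the bottom of the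
stack (which counts as an additional adjacency). -/
def aU (C : UStack) : ℕ :=
  ((C.zip C.tail).filter fun pq => pq.1 + 1 == pq.2 || pq.2 + 1 == pq.1).length +
    (if C.getLast? = some C.length then 1 else 0)


section PancakeAux
open Finset Equiv

def padj : ℕ × ℕ → Bool := fun pq => pq.1 + 1 == pq.2 || pq.2 + 1 == pq.1
def adj (C : List ℕ) : ℕ := ((C.zip C.tail).filter padj).length
lemma adj_cons_cons (a b : ℕ) (l : List ℕ) :
    adj (a :: b :: l) = (if padj (a, b) then 1 else 0) + adj (b :: l) := by
  simp only [adj, List.tail_cons, List.zip_cons_cons, List.filter_cons]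
  split <;> simp [Nat.add_comm]

lemma adj_append (x y : ℕ) (l m : List ℕ) :
    adj ((l ++ [x]) ++ (y :: m)) =
      adj (l ++ [x]) + (if padj (x, y) then 1 else 0) + adj (y :: m) := by
  induction l with
  | nil => simp only [List.nil_append, List.singleton_append]; rw [adj_cons_cons]; unfold adj; simp [Nat.add_comm]
  | cons a l ih =>
    cases l with
    | nil =>
      simp only [List.nil_append, List.cons_append, List.singleton_append] at *
      rw [adj_cons_cons, adj_cons_cons, adj_cons_cons]
      unfold adj; simp; ring
    | cons b l' =>
      simp only [List.cons_append] at *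
      rw [adj_cons_cons, adj_cons_cons, ih]
      ring

lemma padj_swap (a b : ℕ) : padj (a, b) = padj (b, a) := by
  simp [padj, Bool.or_comm]

lemma adj_reverse (l : List ℕ) : adj l.reverse = adj l := by
  induction l with
  | nil => rfl
  | cons a m ih =>
    cases m with
    | nil => rfl
    | cons b m' =>
      have h : (a :: b :: m').reverse = (m'.reverse ++ [b]) ++ (a :: []) := by simp
      rw [h, adj_append, adj_cons_cons]
      have h2 : (b :: m').reverse = m'.reverse ++ [b] := by simp
      rw [h2] at ih
      rw [ih, padj_swap]
      unfold adj; simp; ring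

lemma adj_add_le_append (X : List ℕ) (y : ℕ) (ys : List ℕ) :
    adj X + adj (y :: ys) ≤ adj (X ++ y :: ys) := by
  induction X with
  | nil => simp [adj]
  | cons a l ih =>
    cases l with
    | nil =>
      simp only [List.singleton_append]
      rw [adj_cons_cons]
      have : adj [a] = 0 := rfl
      omega
    | cons b l' =>
      simp only [List.cons_append] at *
      rw [adj_cons_cons, adj_cons_cons]
      omega

lemma aU_eq (C : List ℕ) :
    aU C = adj C + (if C.getLast? = some C.length then 1 else 0) := rfl

lemma length_uflip (i : ℕ) (C : List ℕ) : (uflip i C).length = C.length := by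
  simp [uflip]; omega

lemma aU_uflip_le (i : ℕ) (C : List ℕ) : aU (uflip i C) ≤ aU C + 1 := by
  rcases Nat.eq_zero_or_pos i with hi | hi
  · simp [hi, uflip, aU]
  rcases le_or_gt C.length i with hlen | hlen
  · -- drop is empty, flip = reverse
    have hd : C.drop i = [] := List.drop_eq_nil_of_le hlen
    have ht : C.take i = C := List.take_of_length_le hlen
    rw [aU_eq, aU_eq, uflip, hd, ht, List.append_nil, adj_reverse]
    split <;> split <;> omega
  · -- both take and drop nonempty
    obtain ⟨b, B', hB⟩ : ∃ b B', C.drop i = b :: B' := by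
      cases h : C.drop i with
      | nil => exfalso; have := congrArg List.length h; simp at this; omega
      | cons b B' => exact ⟨b, B', rfl⟩
    obtain ⟨a, A', hA⟩ : ∃ a A', C.take i = a :: A' := by
      cases h : C.take i with
      | nil =>
        exfalso
        have h2 : (C.take i).length = 0 := by rw [h]; rfl
        rw [List.length_take] at h2
        omega
      | cons a A' => exact ⟨a, A', rfl⟩
    rw [aU_eq, aU_eq]
    have hlen' : (uflip i C).length = C.length := length_uflip i C
    have hflip : uflip i C = (A'.reverse ++ [a]) ++ (b :: B') := by
      simp [uflip, hA, hB]
    have hC : C = (a :: A') ++ (b :: B') := by rw [← hA, ← hB]; simp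
    have hlast : (uflip i C).getLast? = C.getLast? := by
      rw [hflip]
      rw [List.getLast?_append_of_ne_nil _ (by simp : (b :: B') ≠ [])]
      conv_rhs => rw [hC]
      rw [List.getLast?_append_of_ne_nil _ (by simp : (b :: B') ≠ [])]
    have h1 : adj (uflip i C) ≤ adj C + 1 := by
      rw [hflip, adj_append]
      have h2 : adj (A'.reverse ++ [a]) = adj (a :: A') := by
        rw [show A'.reverse ++ [a] = (a :: A').reverse by simp, adj_reverse]
      rw [h2]
      have h3 := adj_add_le_append (a :: A') b B'
      rw [← hC] at h3
      split <;> omega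
    rw [hlast, hlen']
    omega

lemma aU_foldl_le (s : List ℕ) : ∀ C : List ℕ,
    aU (s.foldl (fun D i => uflip i D) C) ≤ aU C + s.length := by
  induction s with
  | nil => intro C; simp
  | cons i s ih =>
    intro C
    calc aU ((i :: s).foldl (fun D i => uflip i D) C)
        = aU (s.foldl (fun D i => uflip i D) (uflip i C)) := rfl
      _ ≤ aU (uflip i C) + s.length := ih _
      _ ≤ aU C + 1 + s.length := by have := aU_uflip_le i C; omega
      _ = aU C + (i :: s).length := by simp; omega

lemma uId_succ (n : ℕ) : uId (n + 1) = uId n ++ [n + 1] := by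
  simp [uId, List.range_succ]

lemma length_uId (n : ℕ) : (uId n).length = n := by simp [uId]

lemma getLast?_uId (n : ℕ) (hn : 1 ≤ n) : (uId n).getLast? = some n := by
  obtain ⟨m, rfl⟩ := Nat.exists_eq_add_of_le hn
  rw [show 1 + m = m + 1 by omega, uId_succ]
  rw [List.getLast?_append_of_ne_nil _ (by simp)]
  rfl

lemma adj_uId (n : ℕ) : adj (uId n) + 1 = n + (if n = 0 then 1 else 0) := by
  induction n with
  | zero => rfl
  | succ m ih =>
    rcases Nat.eq_zero_or_pos m with hm | hm
    · subst hm; rfl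
    rw [uId_succ]
    have hm' : uId m = uId (m - 1) ++ [m] := by
      conv_lhs => rw [show m = (m - 1) + 1 by omega]
      rw [uId_succ (m - 1), show m - 1 + 1 = m by omega]
    rw [hm', show uId (m-1) ++ [m] ++ [m+1] = uId (m-1) ++ [m] ++ ((m+1) :: []) from rfl, adj_append, ← hm']
    have hp : padj (m, m + 1) = true := by simp [padj]
    rw [hp]
    simp only [if_true]
    have : adj [m + 1] = 0 := rfl
    rw [if_neg (by omega : ¬ m = 0)] at ih
    rw [if_neg (by omega : ¬ m + 1 = 0)]
    omega

lemma aU_uId (n : ℕ) (hn : 1 ≤ n) : aU (uId n) = n := by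
  rw [aU_eq, length_uId, getLast?_uId n hn, if_pos rfl]
  have := adj_uId n
  rw [if_neg (by omega)] at this
  omega

lemma uflip_perm (i : ℕ) (C : List ℕ) : (uflip i C).Perm C := by
  have : C = C.take i ++ C.drop i := (List.take_append_drop i C).symm
  conv_rhs => rw [this]
  exact (List.reverse_perm _).append_right _

lemma uflip_append_singleton (i : ℕ) (D : List ℕ) (x : ℕ) (h : i ≤ D.length) :
    uflip i (D ++ [x]) = uflip i D ++ [x] := by
  unfold uflip
  rw [List.take_append_of_le_length h, List.drop_append_of_le_length h, List.append_assoc]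

lemma foldl_append_singleton (s : List ℕ) : ∀ (D : List ℕ) (x : ℕ),
    (∀ i ∈ s, i ≤ D.length) →
    s.foldl (fun D i => uflip i D) (D ++ [x]) = s.foldl (fun D i => uflip i D) D ++ [x] := by
  induction s with
  | nil => intros; rfl
  | cons i s ih =>
    intro D x h
    have hi : i ≤ D.length := h i (by simp)
    simp only [List.foldl_cons]
    rw [uflip_append_singleton i D x hi]
    exact ih _ x (fun j hj => (length_uflip i D) ▸ h j (by simp [hj]))

lemma sortable : ∀ (n : ℕ) (C : List ℕ), C.Perm (uId n) →
    ∃ s : List ℕ, (∀ i ∈ s, 1 ≤ i ∧ i ≤ n) ∧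
      s.foldl (fun D i => uflip i D) C = uId n := by
  intro n
  induction n with
  | zero =>
    intro C h
    refine ⟨[], by simp, ?_⟩
    simpa [uId] using h
  | succ n ih =>
    intro C h
    have hlen : C.length = n + 1 := by
      have := h.length_eq; simpa [uId] using this
    have hmem : (n + 1) ∈ C := by
      rw [h.mem_iff]
      simp only [uId, List.mem_map, List.mem_range]
      exact ⟨n, by omega, rfl⟩
    obtain ⟨k, hk, hget⟩ := List.getElem_of_mem hmem
    -- Step 1: flip n+1 to the top
    set E := uflip (k + 1) C with hE
    have htake : C.take (k + 1) = C.take k ++ [n + 1] := by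
      rw [List.take_succ]
      congr 1
      rw [List.getElem?_eq_getElem hk, hget]
      rfl
    have hEeq : E = (n + 1) :: ((C.take k).reverse ++ C.drop (k + 1)) := by
      rw [hE]; unfold uflip
      rw [htake, List.reverse_append]
      rfl
    -- Step 2: flip the whole stack
    set T := (C.take k).reverse ++ C.drop (k + 1) with hT
    have hElen : E.length = n + 1 := by rw [hE, length_uflip, hlen]
    have hTlen0 : T.length = n := by
      rw [hT]
      simp only [List.length_append, List.length_reverse, List.length_take, List.length_drop]
      omega
    have hF : uflip (n + 1) E = T.reverse ++ [n + 1] := by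
      unfold uflip
      rw [← hElen, List.take_length, List.drop_length, hEeq]
      simp [hTlen0]
    have hTperm : T.reverse.Perm (uId n) := by
      have h1 : (T.reverse ++ [n + 1]).Perm (uId n ++ [n + 1]) := by
        rw [← hF, ← uId_succ]
        exact ((uflip_perm _ E).trans ((uflip_perm _ C))).trans h
      exact (List.perm_append_right_iff _).mp h1
    obtain ⟨s', hs'bound, hs'sort⟩ := ih T.reverse hTperm
    have hTlen : T.reverse.length = n := by
      have := hTperm.length_eq
      simpa [uId] using this
    refine ⟨(k + 1) :: (n + 1) :: s', ?_, ?_⟩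
    · intro i hi
      simp only [List.mem_cons] at hi
      rcases hi with rfl | rfl | hi
      · omega
      · omega
      · have := hs'bound i hi; omega
    · simp only [List.foldl_cons]
      rw [← hE, hF, foldl_append_singleton s' T.reverse (n + 1)
        (fun i hi => by have := hs'bound i hi; omega), hs'sort, ← uId_succ]

lemma le_fU_add_aU (n : ℕ) (hn : 1 ≤ n) (C : List ℕ) (h : C.Perm (uId n)) :
    n ≤ fU C + aU C := by
  have hlen : C.length = n := by
    have := h.length_eq; simpa [uId] using this
  obtain ⟨s, hb, hsort⟩ := sortable n C h
  have hne : { m | ∃ s : List ℕ, (∀ i ∈ s, 1 ≤ i ∧ i ≤ C.length) ∧ s.length = m ∧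
      s.foldl (fun D i => uflip i D) C = uId C.length }.Nonempty :=
    ⟨s.length, s, fun i hi => by rw [hlen]; exact hb i hi, rfl, by rw [hlen]; exact hsort⟩
  obtain ⟨s₀, _, hlen0, hsort0⟩ := Nat.sInf_mem hne
  have h1 : aU (uId n) ≤ aU C + s₀.length := by
    rw [← hlen] at *
    rw [← hsort0]
    exact aU_foldl_le s₀ C
  rw [aU_uId n hn] at h1
  have : s₀.length = fU C := hlen0
  omega

lemma toUStack_perm {n : ℕ} (π : Equiv.Perm (Fin n)) : (toUStack π).Perm (uId n) := by
  have h1 : toUStack π = ((List.finRange n).map ⇑π).map (fun j : Fin n => (j : ℕ) + 1) := by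
    rw [List.map_map]; rfl
  have h2 : ((List.finRange n).map ⇑π).Perm (List.finRange n) := by
    apply List.Subperm.perm_of_length_le
    · apply List.subperm_of_subset
      · exact (List.nodup_finRange n).map π.injective
      · intro x _; exact List.mem_finRange x
    · simp
  have h3 : (List.finRange n).map (fun j : Fin n => (j : ℕ) + 1) = uId n := by
    rw [show (fun j : Fin n => (j : ℕ) + 1) = (fun k : ℕ => k + 1) ∘ Fin.val from rfl,
      ← List.map_map, List.map_coe_finRange_eq_range]
    rfl
  rw [h1, ← h3]
  exact h2.map _


lemma card_stab (A : Finset (Fin n)) :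
    (univ.filter (fun σ : Equiv.Perm (Fin n) => ∀ x ∈ A, σ x = x)).card ≤
      (n - A.card).factorial := by
  classical
  set T := univ.filter (fun σ : Equiv.Perm (Fin n) => ∀ x ∈ A, σ x = x) with hT
  have hcard : Fintype.card {x : Fin n // x ∉ A} = n - A.card := by
    rw [Fintype.card_subtype_compl]
    simp [Fintype.card_coe]
  have hmemT : ∀ σ : Equiv.Perm (Fin n), σ ∈ T → ∀ x ∈ A, σ x = x := by
    intro σ hσ
    rw [hT, mem_filter] at hσ
    exact hσ.2
  have hiff : ∀ (σ : Equiv.Perm (Fin n)), σ ∈ T → ∀ x : Fin n, x ∉ A ↔ σ x ∉ A := by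
    intro σ hσ x
    constructor
    · intro hx hmem
      have h1 : σ (σ x) = σ x := hmemT σ hσ _ hmem
      have h2 : σ x = x := σ.injective h1
      exact hx (h2 ▸ hmem)
    · intro hx hmem
      have h2 : σ x = x := hmemT σ hσ x hmem
      exact hx (by rw [h2]; exact hmem)
  let Φ : {σ // σ ∈ T} → Equiv.Perm {x : Fin n // x ∉ A} :=
    fun σp => σp.1.subtypePerm (fun x => (hiff σp.1 σp.2 x).symm)
  have hinj : Function.Injective Φ := by
    rintro ⟨σ, hσ⟩ ⟨σ', hσ'⟩ heq
    rw [Subtype.mk_eq_mk]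
    apply Equiv.ext
    intro x
    by_cases hx : x ∈ A
    · rw [hmemT σ hσ x hx, hmemT σ' hσ' x hx]
    · have := congrArg (fun (e : Equiv.Perm {x : Fin n // x ∉ A}) => (e ⟨x, hx⟩ : Fin n)) heq
      simpa [Φ, Equiv.Perm.subtypePerm] using this
  calc T.card = Fintype.card {σ // σ ∈ T} := (Fintype.card_coe T).symm
    _ ≤ Fintype.card (Equiv.Perm {x : Fin n // x ∉ A}) := Fintype.card_le_of_injective Φ hinj
    _ = (n - A.card).factorial := by rw [Fintype.card_perm, hcard]

lemma card_sendsto (A : Finset (Fin n)) (t : Fin n → Fin n) :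
    (univ.filter (fun π : Equiv.Perm (Fin n) => ∀ x ∈ A, π x = t x)).card ≤
      (n - A.card).factorial := by
  classical
  set S := univ.filter (fun π : Equiv.Perm (Fin n) => ∀ x ∈ A, π x = t x) with hS
  rcases S.eq_empty_or_nonempty with he | ⟨π₀, hπ₀⟩
  · rw [he]; simp
  have hπ₀' : ∀ x ∈ A, π₀ x = t x := by
    rw [hS, mem_filter] at hπ₀; exact hπ₀.2
  have : S.card ≤ (univ.filter (fun σ : Equiv.Perm (Fin n) => ∀ x ∈ A, σ x = x)).card := by
    apply Finset.card_le_card_of_injOn (fun π => π₀⁻¹ * π)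
    · intro π hπ
      simp only [Finset.mem_coe, hS, mem_filter] at hπ
      rw [Finset.mem_coe, mem_filter]
      refine ⟨mem_univ _, fun x hx => ?_⟩
      simp only [Equiv.Perm.mul_apply]
      rw [hπ.2 x hx, ← hπ₀' x hx]
      simp
    · intro π _ π' _ h
      simpa using congrArg (fun σ => π₀ * σ) h
  exact this.trans (card_stab A)

lemma card_single (a v : Fin n) :
    (univ.filter (fun π : Equiv.Perm (Fin n) => π a = v)).card ≤ (n - 1).factorial := by
  classical
  have h := card_sendsto ({a} : Finset (Fin n)) (fun _ => v)
  simp only [Finset.mem_singleton, Finset.card_singleton] at h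
  calc (univ.filter (fun π : Equiv.Perm (Fin n) => π a = v)).card
      = (univ.filter (fun π : Equiv.Perm (Fin n) => ∀ x, x = a → π x = v)).card := by
        apply congrArg
        apply Finset.filter_congr
        intro π _
        constructor
        · rintro hp x rfl; exact hp
        · intro hp; exact hp a rfl
    _ ≤ (n - 1).factorial := h

lemma card_pair (a b v w : Fin n) (hab : a ≠ b) :
    (univ.filter (fun π : Equiv.Perm (Fin n) => π a = v ∧ π b = w)).card ≤
      (n - 2).factorial := by
  classical
  have h := card_sendsto ({a, b} : Finset (Fin n)) (fun x => if x = a then v else w)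
  have hcard : ({a, b} : Finset (Fin n)).card = 2 := by
    rw [Finset.card_insert_of_notMem (by simpa using hab), Finset.card_singleton]
  rw [hcard] at h
  refine le_trans (le_of_eq ?_) h
  apply congrArg
  apply Finset.filter_congr
  intro π _
  simp only [Finset.mem_insert, Finset.mem_singleton]
  constructor
  · rintro ⟨h1, h2⟩ x (rfl | rfl)
    · simpa using h1
    · rw [if_neg hab.symm] at *; exact h2
  · intro hp
    refine ⟨by simpa using hp a (Or.inl rfl), ?_⟩
    have := hp b (Or.inr rfl)
    rwa [if_neg hab.symm] at this

lemma card_succ_rel (a b : Fin n) (hab : a ≠ b) :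
    (univ.filter (fun π : Equiv.Perm (Fin n) => (π b : ℕ) = (π a : ℕ) + 1)).card ≤
      (n - 1).factorial := by
  classical
  have hn2 : 2 ≤ n := by
    by_contra h
    push_neg at h
    interval_cases n
    · exact a.elim0
    · exact hab (Subsingleton.elim a b)
  set S := univ.filter (fun π : Equiv.Perm (Fin n) => (π b : ℕ) = (π a : ℕ) + 1) with hS
  rw [Finset.card_eq_sum_card_fiberwise (f := fun π => π a) (t := univ)
    (fun x _ => mem_univ _)]
  have hfib : ∀ v : Fin n,
      (S.filter (fun π => π a = v)).card ≤ if (v : ℕ) + 1 < n then (n - 2).factorial else 0 := by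
    intro v
    split_ifs with hv
    · refine le_trans (Finset.card_le_card ?_) (card_pair a b v ⟨(v : ℕ) + 1, hv⟩ hab)
      intro π hπ
      rw [hS] at hπ
      simp only [Finset.mem_filter, Finset.mem_univ, true_and] at hπ ⊢
      obtain ⟨h1, h2⟩ := hπ
      refine ⟨h2, ?_⟩
      apply Fin.ext
      rw [h1, h2]
    · convert Nat.zero_le 0
      rw [Finset.card_eq_zero, Finset.filter_eq_empty_iff]
      intro π hπ
      rw [hS] at hπ
      simp only [Finset.mem_filter, Finset.mem_univ, true_and] at hπ
      intro hav
      have : ((π b : ℕ)) < n := (π b).isLt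
      rw [hπ, hav] at this
      omega
  calc ∑ v : Fin n, (S.filter (fun π => π a = v)).card
      ≤ ∑ v : Fin n, if (v : ℕ) + 1 < n then (n - 2).factorial else 0 :=
        Finset.sum_le_sum (fun v _ => hfib v)
    _ = ∑ v ∈ univ.filter (fun v : Fin n => (v : ℕ) + 1 < n), (n - 2).factorial := by
        rw [Finset.sum_filter]
    _ ≤ (n - 1) * (n - 2).factorial := by
        apply le_trans (Finset.sum_le_card_nsmul _ _ _ (fun v _ => le_refl _))
        simp only [smul_eq_mul]
        apply Nat.mul_le_mul_right
        have hsub : univ.filter (fun v : Fin n => (v : ℕ) + 1 < n) ⊆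
            univ.erase ⟨n - 1, by omega⟩ := by
          intro v hv
          simp only [Finset.mem_filter] at hv
          apply Finset.mem_erase.mpr
          refine ⟨?_, mem_univ _⟩
          intro heq
          rw [heq] at hv
          simp at hv
          omega
        have := Finset.card_le_card hsub
        rwa [Finset.card_erase_of_mem (mem_univ _), Finset.card_univ, Fintype.card_fin] at this
    _ = (n - 1).factorial := by
        rw [show n - 1 = (n - 2) + 1 by omega, Nat.factorial_succ]

lemma length_filter_ofFn {α : Type*} (p : α → Bool) :
    ∀ (m : ℕ) (g : Fin m → α),
    ((List.ofFn g).filter p).length = ∑ j : Fin m, if p (g j) then 1 else 0 := by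
  intro m
  induction m with
  | zero => intro g; simp
  | succ m ih =>
    intro g
    rw [List.ofFn_succ, List.filter_cons, Fin.sum_univ_succ]
    split <;> simp [ih, Nat.add_comm]
lemma zip_tail_ofFn {α : Type*} :
    ∀ (m : ℕ) (f : Fin (m + 1) → α),
    (List.ofFn f).zip (List.ofFn f).tail =
      List.ofFn (fun j : Fin m => (f j.castSucc, f j.succ)) := by
  intro m
  induction m with
  | zero => intro f; simp [List.ofFn_succ]
  | succ m ih =>
    intro f
    rw [List.ofFn_succ (f := f)]
    rw [List.tail_cons]
    conv_lhs => rw [List.ofFn_succ (f := fun i : Fin (m+1) => f i.succ)]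
    rw [List.zip_cons_cons]
    have h2 := ih (fun i => f i.succ)
    rw [List.ofFn_succ (f := fun i : Fin (m+1) => f i.succ)] at h2
    rw [List.tail_cons] at h2
    rw [h2]
    rw [List.ofFn_succ (f := fun j : Fin (m+1) => (f j.castSucc, f j.succ))]
    congr 1
lemma getLast?_ofFn {α : Type*} (m : ℕ) (f : Fin (m + 1) → α) :
    (List.ofFn f).getLast? = some (f (Fin.last m)) := by
  rw [List.getLast?_eq_getElem?, List.length_ofFn,
    List.getElem?_eq_getElem (by simp : m + 1 - 1 < (List.ofFn f).length), List.getElem_ofFn]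
  congr 1

lemma toUStack_eq_ofFn {n : ℕ} (π : Equiv.Perm (Fin n)) :
    toUStack π = List.ofFn (fun j => (π j : ℕ) + 1) := by
  rw [toUStack, List.ofFn_eq_map]

lemma aU_toUStack (m : ℕ) (π : Equiv.Perm (Fin (m + 1))) :
    aU (toUStack π) =
      (∑ j : Fin m, if ((π j.castSucc : ℕ) + 1 = (π j.succ : ℕ) ∨
          (π j.succ : ℕ) + 1 = (π j.castSucc : ℕ)) then 1 else 0) +
        (if π (Fin.last m) = Fin.last m then 1 else 0) := by
  rw [aU, toUStack_eq_ofFn]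
  set f : Fin (m + 1) → ℕ := fun j => (π j : ℕ) + 1 with hf
  congr 1
  · rw [zip_tail_ofFn, length_filter_ofFn]
    apply Finset.sum_congr rfl
    intro j _
    apply if_congr _ rfl rfl
    simp only [hf]
    constructor
    · intro h
      rcases Bool.or_eq_true _ _ |>.mp h with h1 | h1
      · left; have := Nat.beq_eq_true_eq _ _ ▸ h1; omega
      · right; have := Nat.beq_eq_true_eq _ _ ▸ h1; omega
    · intro h
      apply Bool.or_eq_true _ _ |>.mpr
      rcases h with h1 | h1
      · left; rw [Nat.beq_eq_true_eq]; omega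
      · right; rw [Nat.beq_eq_true_eq]; omega
  · rw [getLast?_ofFn, List.length_ofFn]
    apply if_congr _ rfl rfl
    rw [Option.some_inj]
    simp only [hf]
    constructor
    · intro h
      apply Fin.ext
      rw [Fin.val_last]
      omega
    · intro h
      rw [h, Fin.val_last]


lemma sum_aU_le (m : ℕ) :
    ∑ π : Equiv.Perm (Fin (m + 1)), aU (toUStack π) ≤ 2 * (m + 1).factorial := by
  classical
  have hsum : ∑ π : Equiv.Perm (Fin (m + 1)), aU (toUStack π) =
      (∑ π : Equiv.Perm (Fin (m + 1)), ∑ j : Fin m,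
        if ((π j.castSucc : ℕ) + 1 = (π j.succ : ℕ) ∨
          (π j.succ : ℕ) + 1 = (π j.castSucc : ℕ)) then 1 else 0) +
      ∑ π : Equiv.Perm (Fin (m + 1)), (if π (Fin.last m) = Fin.last m then 1 else 0) := by
    rw [← Finset.sum_add_distrib]
    exact Finset.sum_congr rfl (fun π _ => aU_toUStack m π)
  rw [hsum]
  have hB : ∑ π : Equiv.Perm (Fin (m + 1)), (if π (Fin.last m) = Fin.last m then 1 else 0) ≤
      Nat.factorial m := by
    rw [← Finset.card_filter]
    have := card_single (n := m + 1) (Fin.last m) (Fin.last m)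
    simpa using this
  have hA : ∀ j : Fin m, (∑ π : Equiv.Perm (Fin (m + 1)),
      if ((π j.castSucc : ℕ) + 1 = (π j.succ : ℕ) ∨
        (π j.succ : ℕ) + 1 = (π j.castSucc : ℕ)) then 1 else 0) ≤ 2 * Nat.factorial m := by
    intro j
    rw [← Finset.card_filter]
    have hab : (j.castSucc : Fin (m + 1)) ≠ j.succ := (Fin.castSucc_lt_succ (i := j)).ne
    have hsplit : (univ.filter (fun π : Equiv.Perm (Fin (m + 1)) =>
        ((π j.castSucc : ℕ) + 1 = (π j.succ : ℕ) ∨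
          (π j.succ : ℕ) + 1 = (π j.castSucc : ℕ)))) =
        (univ.filter (fun π : Equiv.Perm (Fin (m + 1)) =>
          (π j.succ : ℕ) = (π j.castSucc : ℕ) + 1)) ∪
        (univ.filter (fun π : Equiv.Perm (Fin (m + 1)) =>
          (π j.castSucc : ℕ) = (π j.succ : ℕ) + 1)) := by
      rw [← Finset.filter_or]
      apply Finset.filter_congr
      intro π _
      constructor
      · rintro (h | h)
        · left; omega
        · right; omega
      · rintro (h | h)
        · left; omega
        · right; omega
    rw [hsplit]
    apply le_trans (Finset.card_union_le _ _)
    have h1 := card_succ_rel (n := m + 1) j.castSucc j.succ hab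
    have h2 := card_succ_rel (n := m + 1) j.succ j.castSucc hab.symm
    simp only [Nat.add_sub_cancel] at h1 h2
    omega
  calc (∑ π : Equiv.Perm (Fin (m + 1)), ∑ j : Fin m,
        if ((π j.castSucc : ℕ) + 1 = (π j.succ : ℕ) ∨
          (π j.succ : ℕ) + 1 = (π j.castSucc : ℕ)) then 1 else 0) +
      ∑ π : Equiv.Perm (Fin (m + 1)), (if π (Fin.last m) = Fin.last m then 1 else 0)
      ≤ (∑ j : Fin m, ∑ π : Equiv.Perm (Fin (m + 1)),
          if ((π j.castSucc : ℕ) + 1 = (π j.succ : ℕ) ∨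
            (π j.succ : ℕ) + 1 = (π j.castSucc : ℕ)) then 1 else 0) + Nat.factorial m := by
        rw [Finset.sum_comm]
        omega
    _ ≤ (∑ _j : Fin m, 2 * Nat.factorial m) + Nat.factorial m := by
        have := Finset.sum_le_sum (fun j (_ : j ∈ univ) => hA j)
        omega
    _ ≤ 2 * (m + 1).factorial := by
        rw [Finset.sum_const, Finset.card_univ, Fintype.card_fin, smul_eq_mul,
          Nat.factorial_succ]
        ring_nf
        omega

end PancakeAux

/-- For every positive integer `n`, the average over all `n!`
permutations `π` of `{1,…,n}` of the minimum number of prefix reversals `f(π)` needed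
to sort `π` is at least `n − 2`. -/
theorem average_fU_lower_bound (n : ℕ) (hn : 1 ≤ n) :
    (n : ℚ) - 2 ≤
      (∑ π : Equiv.Perm (Fin n), (fU (toUStack π) : ℚ)) / n.factorial := by
  classical
  obtain ⟨m, rfl⟩ : ∃ m, n = m + 1 := ⟨n - 1, by omega⟩
  have key : ∀ π : Equiv.Perm (Fin (m + 1)),
      (m + 1) ≤ fU (toUStack π) + aU (toUStack π) :=
    fun π => le_fU_add_aU (m + 1) (by omega) _ (toUStack_perm π)
  have h1 : ∑ _π : Equiv.Perm (Fin (m + 1)), (m + 1) ≤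
      ∑ π : Equiv.Perm (Fin (m + 1)), (fU (toUStack π) + aU (toUStack π)) :=
    Finset.sum_le_sum (fun π _ => key π)
  rw [Finset.sum_const, Finset.card_univ, Fintype.card_perm, Fintype.card_fin,
    smul_eq_mul, Finset.sum_add_distrib] at h1
  have h2 := sum_aU_le m
  have hsum : (m + 1) * (m + 1).factorial ≤
      (∑ π : Equiv.Perm (Fin (m + 1)), fU (toUStack π)) + 2 * (m + 1).factorial := by
    calc (m + 1) * (m + 1).factorial = (m + 1).factorial * (m + 1) := mul_comm _ _
      _ ≤ (∑ π : Equiv.Perm (Fin (m + 1)), fU (toUStack π)) +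
          ∑ π : Equiv.Perm (Fin (m + 1)), aU (toUStack π) := h1
      _ ≤ _ := by omega
  have hNpos : (0 : ℚ) < ((m + 1).factorial : ℚ) :=
    Nat.cast_pos.mpr (Nat.factorial_pos _)
  rw [le_div_iff₀ hNpos]
  have hcast : (∑ π : Equiv.Perm (Fin (m + 1)), (fU (toUStack π) : ℚ)) =
      ((∑ π : Equiv.Perm (Fin (m + 1)), fU (toUStack π) : ℕ) : ℚ) := by
    rw [Nat.cast_sum]
  rw [hcast]
  have hq : ((m + 1 : ℕ) : ℚ) * ((m + 1).factorial : ℚ) ≤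
      ((∑ π : Equiv.Perm (Fin (m + 1)), fU (toUStack π) : ℕ) : ℚ) +
        2 * ((m + 1).factorial : ℚ) := by
    exact_mod_cast hsum
  push_cast at hq ⊢
  linarith
end

section
/- Let C be a stack of n ≥ 2 burnt pancakes containing a pair of pancakes in consecutive positions that are adjacent, and let C' be the stack of n−1 burnt pancakes obtained from C by contracting these two adjacent pancakes into a single pancake (equivalently, by removing one of the two and renumbering). Then the minimum numbers of flips needed to sort C and C' are equal: g(C) = g(C'). -/
/-- Renumber the sizes of the pancakes of `C` order-preservingly to `{1,…,C.length}`: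
each pancake receives as new size the number of pancakes of `C` with strictly smaller
size, plus one.  Orientations are kept. -/
def renumber (C : BStack) : BStack :=
  C.map fun p => (((C.map Prod.fst).filter fun s => decide (s < p.1)).length + 1, p.2)

namespace PancakeAux

abbrev negp : ℕ × Bool → ℕ × Bool := fun p => (p.1, !p.2)

def fm (f : ℕ × Bool → BStack) : BStack → BStack
  | [] => []
  | x :: l => f x ++ fm f l

lemma fm_append (f : ℕ × Bool → BStack) (l₁ l₂ : BStack) :
    fm f (l₁ ++ l₂) = fm f l₁ ++ fm f l₂ := by
  induction l₁ with
  | nil => simp [fm]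
  | cons x l ih => simp [fm, ih]

lemma fm_id {f : ℕ × Bool → BStack} {l : BStack} (h : ∀ x ∈ l, f x = [x]) :
    fm f l = l := by
  induction l with
  | nil => rfl
  | cons x l ih =>
    simp only [fm]
    rw [h x (by simp), ih fun y hy => h y (by simp [hy])]
    rfl

lemma fm_map (f : ℕ × Bool → BStack) (g : ℕ × Bool → ℕ × Bool) (l : BStack) :
    fm f (l.map g) = fm (fun x => f (g x)) l := by
  induction l with
  | nil => rfl
  | cons x l ih => simp [fm, ih]

lemma fm_fm (f g : ℕ × Bool → BStack) (l : BStack) :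
    fm g (fm f l) = fm (fun x => fm g (f x)) l := by
  induction l with
  | nil => rfl
  | cons x l ih => simp [fm, fm_append, ih]

def NegOK (f : ℕ × Bool → BStack) : Prop :=
  ∀ u b, f (u, !b) = ((f (u, b)).reverse.map negp)

lemma fm_revneg {f : ℕ × Bool → BStack} (hf : NegOK f) (l : BStack) :
    fm f (l.reverse.map negp) = ((fm f l).reverse.map negp) := by
  induction l with
  | nil => simp [fm]
  | cons x l ih =>
    obtain ⟨u, b⟩ := x
    simp only [List.reverse_cons, List.map_append, fm_append, ih, fm]
    simp [fm, hf u b]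

lemma bflip_fm {f : ℕ × Bool → BStack} (hf : NegOK f) (i : ℕ) (D : BStack) :
    fm f (bflip i D) = bflip (fm f (D.take i)).length (fm f D) := by
  unfold bflip
  rw [fm_append, fm_revneg hf]
  have hX : fm f D = fm f (D.take i) ++ fm f (D.drop i) := by
    rw [← fm_append, List.take_append_drop]
  rw [hX, List.take_left, List.drop_left]

lemma bflip_length (i : ℕ) (C : BStack) : (bflip i C).length = C.length := by
  unfold bflip
  rw [List.length_append, List.length_map, List.length_reverse, List.length_take,
    List.length_drop]
  omega

lemma bflip_zero (C : BStack) : bflip 0 C = C := by simp [bflip]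

lemma fm_length_take_le (f : ℕ × Bool → BStack) (i : ℕ) (D : BStack) :
    (fm f (D.take i)).length ≤ (fm f D).length := by
  conv_rhs => rw [← List.take_append_drop i D]
  rw [fm_append, List.length_append]
  omega

lemma fold_fm {f : ℕ × Bool → BStack} (hf : NegOK f) :
    ∀ (s : List ℕ) (D : BStack), ∃ s' : List ℕ,
      s'.length ≤ s.length ∧ (∀ i ∈ s', 1 ≤ i ∧ i ≤ (fm f D).length) ∧
      s'.foldl (fun E i => bflip i E) (fm f D) = fm f (s.foldl (fun E i => bflip i E) D) := by
  intro s
  induction s with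
  | nil => exact fun D => ⟨[], by simp, by simp, rfl⟩
  | cons i rest ih =>
    intro D
    obtain ⟨s', h1, h2, h3⟩ := ih (bflip i D)
    have hstep : fm f (bflip i D) = bflip (fm f (D.take i)).length (fm f D) := bflip_fm hf i D
    have hlen : (fm f (bflip i D)).length = (fm f D).length := by
      rw [hstep, bflip_length]
    by_cases hz : (fm f (D.take i)).length = 0
    · refine ⟨s', h1.trans (by simp), ?_, ?_⟩
      · intro a ha
        have := h2 a ha
        omega
      · have heq : fm f (bflip i D) = fm f D := by rw [hstep, hz, bflip_zero]
        rw [← heq]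
        exact h3
    · refine ⟨(fm f (D.take i)).length :: s', by simpa using h1, ?_, ?_⟩
      · intro a ha
        rcases List.mem_cons.mp ha with h | h
        · subst h
          exact ⟨by omega, fm_length_take_le f i D⟩
        · have := h2 a h
          omega
      · simp only [List.foldl_cons]
        rw [← hstep]
        exact h3

def gSet (C : BStack) : Set ℕ :=
  { m | ∃ s : List ℕ, (∀ i ∈ s, 1 ≤ i ∧ i ≤ C.length) ∧ s.length = m ∧
      s.foldl (fun D i => bflip i D) C = Istk C.length }

lemma gB_eq (C : BStack) : gB C = sInf (gSet C) := rfl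

lemma gSet_trans {f : ℕ × Bool → BStack} (hf : NegOK f) (D : BStack)
    (hI : fm f (Istk D.length) = Istk (fm f D).length) :
    ∀ m ∈ gSet D, ∃ m' ∈ gSet (fm f D), m' ≤ m := by
  rintro m ⟨s, hs, rfl, hsort⟩
  obtain ⟨s', h1, h2, h3⟩ := fold_fm hf s D
  exact ⟨s'.length, ⟨s', h2, rfl, by rw [h3, hsort, hI]⟩, h1⟩

lemma sInf_eq_of_rel {A B : Set ℕ} (hAB : ∀ m ∈ A, ∃ m' ∈ B, m' ≤ m)
    (hBA : ∀ m ∈ B, ∃ m' ∈ A, m' ≤ m) : sInf A = sInf B := by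
  by_cases hA : A.Nonempty
  · obtain ⟨mB, hmB, -⟩ := hAB _ (Nat.sInf_mem hA)
    have hB : B.Nonempty := ⟨mB, hmB⟩
    apply le_antisymm
    · obtain ⟨m', hm', hle⟩ := hBA _ (Nat.sInf_mem hB)
      exact le_trans (Nat.sInf_le hm') hle
    · obtain ⟨m', hm', hle⟩ := hAB _ (Nat.sInf_mem hA)
      exact le_trans (Nat.sInf_le hm') hle
  · have hB : ¬ B.Nonempty := by
      rintro ⟨m, hm⟩
      obtain ⟨m', h', -⟩ := hBA m hm
      exact hA ⟨m', h'⟩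
    rw [Set.not_nonempty_iff_eq_empty] at hA hB
    rw [hA, hB]

def fexp (s : ℕ) : ℕ × Bool → BStack := fun (u, b) =>
  if u = s then (if b then [(s + 1, true), (s, true)] else [(s, false), (s + 1, false)])
  else if u < s then [(u, b)] else [(u + 1, b)]

def gproj (s : ℕ) : ℕ × Bool → BStack := fun (u, b) =>
  if u = s then [] else if u = s + 1 then [(s, b)]
  else if u < s then [(u, b)] else [(u - 1, b)]

def relm (t : ℕ) : ℕ × Bool → ℕ × Bool := fun (w, b) => (if t < w then w - 1 else w, b)

lemma fexp_neg (s : ℕ) : NegOK (fexp s) := by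
  intro u b
  by_cases h : u = s
  · subst h; cases b <;> simp [fexp]
  · by_cases h2 : u < s <;> cases b <;> simp [fexp, h, h2]

lemma gproj_neg (s : ℕ) : NegOK (gproj s) := by
  intro u b
  by_cases h : u = s
  · simp [gproj, h]
  · by_cases h2 : u = s + 1 <;> by_cases h3 : u < s <;> simp [gproj, h, h2, h3]

lemma gf_pure (s : ℕ) (x : ℕ × Bool) : fm (gproj s) (fexp s x) = [x] := by
  obtain ⟨u, b⟩ := x
  by_cases h1 : u = s
  · subst h1
    cases b <;> simp [fexp, gproj, fm]
  · by_cases h2 : u < s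
    · simp only [fexp, if_neg h1, if_pos h2, fm]
      simp only [gproj]
      rw [if_neg h1, if_neg (by omega), if_pos h2]
      rfl
    · simp only [fexp, if_neg h1, if_neg h2, fm]
      simp only [gproj]
      rw [if_neg (by omega), if_neg (by omega), if_neg (by omega)]
      have : u + 1 - 1 = u := by omega
      rw [this]
      rfl

lemma Istk_succ (m : ℕ) : Istk (m + 1) = Istk m ++ [(m + 1, false)] := by
  simp [Istk, List.range_succ]

lemma mem_Istk {x : ℕ × Bool} {m : ℕ} (h : x ∈ Istk m) :
    1 ≤ x.1 ∧ x.1 ≤ m ∧ x.2 = false := by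
  simp only [Istk, List.mem_map, List.mem_range] at h
  obtain ⟨k, hk, rfl⟩ := h
  exact ⟨by omega, by omega, rfl⟩

lemma fm_fexp_Istk (s : ℕ) (hs : 1 ≤ s) :
    ∀ d : ℕ, fm (fexp s) (Istk (s + d)) = Istk (s + d + 1) := by
  intro d
  induction d with
  | zero =>
    have h1 : s = (s - 1) + 1 := by omega
    have h2 : fm (fexp s) (Istk (s - 1)) = Istk (s - 1) := by
      apply fm_id
      intro x hx
      obtain ⟨hx1, hx2, hx3⟩ := mem_Istk hx
      obtain ⟨w, b⟩ := x
      simp only [fexp]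
      rw [if_neg (by simp at hx2 ⊢; omega), if_pos (by simp at hx2 ⊢; omega)]
    have h3 : fm (fexp s) [(s - 1 + 1, false)] = [(s, false), (s + 1, false)] := by
      rw [← h1]
      simp [fm, fexp]
    rw [show s + 0 = (s - 1) + 1 by omega, Istk_succ, fm_append, h2, h3]
    conv_rhs => rw [Istk_succ, Istk_succ]
    rw [← h1]
    simp
  | succ d ih =>
    have h3 : fm (fexp s) [(s + d + 1, false)] = [(s + d + 1 + 1, false)] := by
      simp only [fm, fexp]
      rw [if_neg (by omega), if_neg (by omega)]
      rfl
    rw [show s + (d + 1) = (s + d) + 1 by omega, Istk_succ, fm_append, ih, h3]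
    conv_rhs => rw [Istk_succ]

lemma countP_range_lt (w : ℕ) : ∀ n : ℕ,
    (List.range n).countP (fun k => decide (k + 1 < w)) = min (w - 1) n := by
  intro n
  induction n with
  | zero => simp
  | succ n ih =>
    rw [List.range_succ, List.countP_append, ih]
    rw [List.countP_cons]
    simp only [List.countP_nil, decide_eq_true_eq]
    by_cases h : n + 1 < w
    · rw [if_pos h]; omega
    · rw [if_neg h]; omega

lemma fexp_relm_id (s t w : ℕ) (b : Bool) (hw : 1 ≤ w) (hts : t = s ∨ t = s + 1)
    (h1 : w ≠ s) (h2 : w ≠ s + 1) :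
    fexp s (relm t (w, b)) = [(w, b)] := by
  rcases hts with h0 | h0 <;> rw [h0]
  · by_cases h : s < w
    · simp only [relm, if_pos h, fexp]
      rw [if_neg (by omega), if_neg (by omega)]
      have hww : w - 1 + 1 = w := by omega
      rw [hww]
    · simp only [relm, if_neg h, fexp]
      rw [if_neg h1, if_pos (by omega)]
  · by_cases h : s + 1 < w
    · simp only [relm, if_pos h, fexp]
      rw [if_neg (by omega), if_neg (by omega)]
      have hww : w - 1 + 1 = w := by omega
      rw [hww]
    · simp only [relm, if_neg h, fexp]
      rw [if_neg h1, if_pos (by omega)]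

end PancakeAux

open PancakeAux in
/-- Let `C` be a stack of `n ≥ 2` burnt pancakes containing a pair of
pancakes in consecutive positions `j, j+1` that are adjacent, and let `C'` be the stack
of `n−1` burnt pancakes obtained from `C` by contracting these two adjacent pancakes
into a single pancake (equivalently, by removing one of the two and renumbering).
Then `g(C) = g(C')`. -/
theorem gB_contract_adjacent (n : ℕ) (hn : 2 ≤ n) (C : BStack) (hC : IsBStack n C)
    (j : ℕ) (p q : ℕ × Bool) (hp : C[j]? = some p) (hq : C[j + 1]? = some q)
    (hadj : adjPair p q = true) :
    gB C = gB (renumber (C.eraseIdx j)) := by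
  classical
  obtain ⟨hj, hpj⟩ := List.getElem?_eq_some_iff.mp hp
  obtain ⟨hj1, hqj⟩ := List.getElem?_eq_some_iff.mp hq
  have hlenC : C.length = n := by
    have h1 := hC.length_eq
    simpa using h1
  -- decomposition of C
  have hdrop1 : C.drop j = p :: C.drop (j + 1) := by
    rw [List.drop_eq_getElem_cons (by omega), hpj]
  have hdrop2 : C.drop (j + 1) = q :: C.drop (j + 2) := by
    rw [List.drop_eq_getElem_cons (by omega), hqj]
  have hdec : C = C.take j ++ p :: q :: C.drop (j + 2) := by
    conv_lhs => rw [← List.take_append_drop j C]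
    rw [hdrop1, hdrop2]
  have hD : C.eraseIdx j = C.take j ++ q :: C.drop (j + 2) := by
    rw [List.eraseIdx_eq_take_drop_succ, hdrop2]
  -- nodup of sizes
  have hNodupRange : (((List.range n).map (· + 1)) : List ℕ).Nodup :=
    List.Nodup.map (fun a b => by omega) List.nodup_range
  have hNodupC : (C.map Prod.fst).Nodup := hC.nodup_iff.mpr hNodupRange
  -- membership bounds
  have hmemC : ∀ x : ℕ × Bool, x ∈ C → 1 ≤ x.1 ∧ x.1 ≤ n := by
    intro x hx
    have hx2 : x.1 ∈ C.map Prod.fst := List.mem_map_of_mem (f := Prod.fst) hx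
    rw [hC.mem_iff] at hx2
    simp only [List.mem_map, List.mem_range] at hx2
    obtain ⟨k, hk, hke⟩ := hx2
    omega
  have hpmem : p ∈ C := by rw [hdec]; simp
  have hqmem : q ∈ C := by rw [hdec]; simp
  have hpbd := hmemC p hpmem
  have hqbd := hmemC q hqmem
  -- adjacency cases
  have hadj' : (p.2 = false ∧ q.2 = false ∧ q.1 = p.1 + 1) ∨
      (p.2 = true ∧ q.2 = true ∧ p.1 = q.1 + 1) := by
    have h := hadj
    simp only [adjPair, Bool.or_eq_true, Bool.and_eq_true, Bool.not_eq_true',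
      beq_iff_eq] at h
    tauto
  have hpqex : ∃ s : ℕ, (p = (s, false) ∧ q = (s + 1, false)) ∨
      (p = (s + 1, true) ∧ q = (s, true)) := by
    rcases hadj' with ⟨h1, h2, h3⟩ | ⟨h1, h2, h3⟩
    · exact ⟨p.1, Or.inl ⟨Prod.ext rfl h1, Prod.ext h3 h2⟩⟩
    · exact ⟨q.1, Or.inr ⟨Prod.ext h3 h1, Prod.ext rfl h2⟩⟩
  obtain ⟨s, hpq⟩ := hpqex
  have hpqs : (p.1 = s ∧ q.1 = s + 1) ∨ (p.1 = s + 1 ∧ q.1 = s) := by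
    rcases hpq with ⟨h1, h2⟩ | ⟨h1, h2⟩ <;> rw [h1, h2] <;> simp
  have hsbd : 1 ≤ s ∧ s + 1 ≤ n := by
    rcases hpqs with ⟨h1, h2⟩ | ⟨h1, h2⟩ <;> omega
  -- structure of the size list
  have hmapC : C.map Prod.fst = (C.take j).map Prod.fst ++
      p.1 :: q.1 :: (C.drop (j + 2)).map Prod.fst := by
    conv_lhs => rw [hdec]
    simp
  have hmapD : (C.eraseIdx j).map Prod.fst = (C.take j).map Prod.fst ++
      q.1 :: (C.drop (j + 2)).map Prod.fst := by
    rw [hD]; simp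
  have hNodupSplit : ((C.take j).map Prod.fst ++
      p.1 :: q.1 :: (C.drop (j + 2)).map Prod.fst).Nodup := by
    rw [← hmapC]; exact hNodupC
  have htD : p.1 ∉ ((C.eraseIdx j).map Prod.fst) := by
    rw [hmapD]
    intro hmem
    rcases List.mem_append.mp hmem with h | h
    · exact (List.nodup_append'.mp hNodupSplit).2.2 h (by simp)
    · have h3 := (List.nodup_append'.mp hNodupSplit).2.1
      simp only [List.nodup_cons] at h3
      exact h3.1 h
  have hqD : q.1 ∉ ((C.take j).map Prod.fst) ∧ q.1 ∉ ((C.drop (j + 2)).map Prod.fst) := by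
    have h2 := List.nodup_append'.mp hNodupSplit
    constructor
    · intro h; exact h2.2.2 h (by simp)
    · have h3 : (p.1 :: q.1 :: (C.drop (j + 2)).map Prod.fst).Nodup := h2.2.1
      simp only [List.nodup_cons] at h3
      exact h3.2.1
  -- permutation fact
  have hpermD : (C.map Prod.fst).Perm (p.1 :: (C.eraseIdx j).map Prod.fst) := by
    rw [hmapC, hmapD]
    exact List.perm_middle
  -- membership bounds for D
  have hmemD : ∀ x : ℕ × Bool, x ∈ C.eraseIdx j → 1 ≤ x.1 ∧ x.1 ≤ n ∧ x.1 ≠ p.1 := by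
    intro x hx
    have hxt : x.1 ≠ p.1 := fun h => htD (h ▸ List.mem_map_of_mem (f := Prod.fst) hx)
    have hxC : x ∈ C := by
      rw [hD] at hx
      rw [hdec]
      rcases List.mem_append.mp hx with h | h
      · exact List.mem_append.mpr (Or.inl h)
      · rcases List.mem_cons.mp h with h | h
        · exact List.mem_append.mpr (Or.inr (by simp [h]))
        · exact List.mem_append.mpr (Or.inr (by simp [h]))
    exact ⟨(hmemC x hxC).1, (hmemC x hxC).2, hxt⟩
  -- renumber = relabel
  have hrenum : renumber (C.eraseIdx j) = (C.eraseIdx j).map (relm p.1) := by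
    unfold renumber
    apply List.map_congr_left
    intro x hx
    obtain ⟨hx1, hx2, hx3⟩ := hmemD x hx
    have hcount : (((C.eraseIdx j).map Prod.fst).filter fun a => decide (a < x.1)).length
        = (if p.1 < x.1 then x.1 - 2 else x.1 - 1) := by
      rw [← List.countP_eq_length_filter]
      have h1 : (C.map Prod.fst).countP (fun a => decide (a < x.1))
          = ((p.1 :: (C.eraseIdx j).map Prod.fst)).countP (fun a => decide (a < x.1)) :=
        hpermD.countP_eq _
      have h2 : (C.map Prod.fst).countP (fun a => decide (a < x.1))
          = min (x.1 - 1) n := by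
        rw [hC.countP_eq, List.countP_map]
        exact countP_range_lt x.1 n
      rw [List.countP_cons] at h1
      simp only [decide_eq_true_eq] at h1
      by_cases h : p.1 < x.1
      · rw [if_pos h]
        rw [if_pos h] at h1
        omega
      · rw [if_neg h]
        rw [if_neg h] at h1
        omega
    rw [hcount]
    obtain ⟨w, b⟩ := x
    simp only [relm]
    simp only at hx1 hx2 hx3
    have hp1 : 1 ≤ p.1 := hpbd.1
    by_cases h : p.1 < w
    · rw [if_pos h, if_pos h]
      exact Prod.ext (by simp; omega) rfl
    · rw [if_neg h, if_neg h]
      exact Prod.ext (by simp; omega) rfl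
  -- identity on non-pair entries
  have hid : ∀ x : ℕ × Bool, x ∈ C.eraseIdx j → x ≠ q →
      fexp s (relm p.1 x) = [x] := by
    intro x hx hxq
    obtain ⟨hx1, hx2, hx3⟩ := hmemD x hx
    have hxq1 : x.1 ≠ q.1 := by
      intro h
      -- q occurs at the q-position; x has same size, nodup forces x = q
      rw [hD] at hx
      rcases List.mem_append.mp hx with hmem | hmem
      · exact hqD.1 (h ▸ List.mem_map_of_mem (f := Prod.fst) hmem)
      · rcases List.mem_cons.mp hmem with hmem | hmem
        · exact hxq hmem
        · exact hqD.2 (h ▸ List.mem_map_of_mem (f := Prod.fst) hmem)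
    obtain ⟨w, b⟩ := x
    simp only at hx1 hx3 hxq1
    apply fexp_relm_id s p.1 w b hx1
    · rcases hpqs with ⟨h1, h2⟩ | ⟨h1, h2⟩
      · exact Or.inl h1
      · exact Or.inr h1
    · rcases hpqs with ⟨h1, h2⟩ | ⟨h1, h2⟩ <;> omega
    · rcases hpqs with ⟨h1, h2⟩ | ⟨h1, h2⟩ <;> omega
  have hqexp : fexp s (relm p.1 q) = [p, q] := by
    rcases hpq with ⟨hp', hq'⟩ | ⟨hp', hq'⟩
    · rw [hp', hq']
      simp [relm, fexp]
    · rw [hp', hq']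
      simp [relm, fexp]
  -- key identity
  have hkey : fm (fexp s) (renumber (C.eraseIdx j)) = C := by
    rw [hrenum, fm_map]
    have hsplit : C.eraseIdx j = C.take j ++ q :: C.drop (j + 2) := hD
    rw [hsplit, fm_append]
    have h1 : fm (fun x => fexp s (relm p.1 x)) (C.take j) = C.take j := by
      apply fm_id
      intro x hx
      apply hid x (by rw [hD]; exact List.mem_append.mpr (Or.inl hx))
      intro hxq
      subst hxq
      exact hqD.1 (List.mem_map_of_mem (f := Prod.fst) hx)
    have h2 : fm (fun x => fexp s (relm p.1 x)) (q :: C.drop (j + 2))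
        = p :: q :: C.drop (j + 2) := by
      simp only [fm]
      rw [hqexp]
      rw [fm_id (f := fun x => fexp s (relm p.1 x)) (l := C.drop (j + 2)) ?_]
      · rfl
      · intro x hx
        apply hid x (by rw [hD]; exact List.mem_append.mpr (Or.inr (by simp [hx])))
        intro hxq
        subst hxq
        exact hqD.2 (List.mem_map_of_mem (f := Prod.fst) hx)
    rw [h1, h2, ← hdec]
  -- lengths
  have hlenD : (renumber (C.eraseIdx j)).length = n - 1 := by
    have h1 : (C.eraseIdx j).length = n - 1 := by
      rw [List.length_eraseIdx, if_pos hj, hlenC]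
    unfold renumber
    rw [List.length_map, h1]
  -- Istk endpoints
  have hIstk_f : fm (fexp s) (Istk (n - 1)) = Istk n := by
    have hd : n - 1 = s + (n - 1 - s) := by omega
    rw [hd, fm_fexp_Istk s hsbd.1 (n - 1 - s), show s + (n - 1 - s) + 1 = n by omega]
  have hgf : ∀ l : BStack, fm (gproj s) (fm (fexp s) l) = l := by
    intro l
    rw [fm_fm]
    exact fm_id fun x _ => gf_pure s x
  have hgC : fm (gproj s) C = renumber (C.eraseIdx j) := by
    conv_lhs => rw [← hkey]
    exact hgf _
  have hIstk_g : fm (gproj s) (Istk n) = Istk (n - 1) := by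
    conv_lhs => rw [← hIstk_f]
    exact hgf _
  -- transfers
  have htrans1 : ∀ m ∈ gSet (renumber (C.eraseIdx j)), ∃ m' ∈ gSet C, m' ≤ m := by
    have h := gSet_trans (fexp_neg s) (renumber (C.eraseIdx j))
      (by rw [hlenD, hIstk_f, hkey, hlenC])
    rw [hkey] at h
    exact h
  have htrans2 : ∀ m ∈ gSet C, ∃ m' ∈ gSet (renumber (C.eraseIdx j)), m' ≤ m := by
    have h := gSet_trans (gproj_neg s) C
      (by rw [hlenC, hIstk_g, hgC, hlenD])
    rw [hgC] at h
    exact h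
  rw [gB_eq, gB_eq]
  exact sInf_eq_of_rel htrans2 htrans1
end
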